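/- arXiv:1603.01562 — 6 statements merged into one kernel-verified Lean document; each statement's English description precedes it below -/
import Mathlib

section
/- Fix s ≥ 1 and let ζ be the real random variable taking the value √s with probability 1/(2s), the value −√s with probability 1/(2s), and the value 0 with probability 1 − 1/s. Then E[ζ] = 0, E[ζ²] = 1, and for every t ∈ ℝ, E[e^{tζ}] ≤ e^{s t² / 2}; that is, ζ is √s-subgaussian. -/
open MeasureTheory Real

lemma integrable_dirac' {f : ℝ → ℝ} (a : ℝ) : Integrable f (Measure.dirac a) := by
  have h : f =ᵐ[Measure.dirac a] fun _ => f a := by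
    rw [MeasureTheory.ae_dirac_eq]; exact Filter.eventually_pure.2 rfl
  exact (integrable_const (f a)).congr h.symm

lemma integral_three (f : ℝ → ℝ) (a b c : ENNReal) (ha : a ≠ ⊤) (hb : b ≠ ⊤) (hc : c ≠ ⊤)
    (p q r : ℝ) :
    ∫ x, f x ∂(a • Measure.dirac p + b • Measure.dirac q + c • Measure.dirac r)
      = a.toReal * f p + b.toReal * f q + c.toReal * f r := by
  have h1 : Integrable f (a • Measure.dirac p) := (integrable_dirac' p).smul_measure ha
  have h2 : Integrable f (b • Measure.dirac q) := (integrable_dirac' q).smul_measure hb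
  have h3 : Integrable f (c • Measure.dirac r) := (integrable_dirac' r).smul_measure hc
  rw [integral_add_measure (h1.add_measure h2) h3, integral_add_measure h1 h2,
    integral_smul_measure, integral_smul_measure, integral_smul_measure,
    integral_dirac, integral_dirac, integral_dirac]
  simp [smul_eq_mul]

/-- **The `ℓ`-percent sparse distribution is `√s`-subgaussian.**
Fix `s ≥ 1` and let `ζ` be distributed as: `√s` with probability `1/(2s)`, `-√s` with
probability `1/(2s)`, and `0` with probability `1 - 1/s`.  Then `E[ζ] = 0`, `E[ζ²] = 1`,
and `E[exp (t ζ)] ≤ exp (s t² / 2)` for all `t ∈ ℝ`, i.e. `ζ` is `√s`-subgaussian. -/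
theorem sparse_distribution_subgaussian (s : ℝ) (hs : 1 ≤ s) :
    (∫ x, x ∂((ENNReal.ofReal (1 / (2 * s))) • Measure.dirac (Real.sqrt s)
        + (ENNReal.ofReal (1 / (2 * s))) • Measure.dirac (-(Real.sqrt s))
        + (ENNReal.ofReal (1 - 1 / s)) • Measure.dirac (0 : ℝ)) = 0) ∧
    (∫ x, x ^ 2 ∂((ENNReal.ofReal (1 / (2 * s))) • Measure.dirac (Real.sqrt s)
        + (ENNReal.ofReal (1 / (2 * s))) • Measure.dirac (-(Real.sqrt s))
        + (ENNReal.ofReal (1 - 1 / s)) • Measure.dirac (0 : ℝ)) = 1) ∧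
    (∀ t : ℝ,
      ∫ x, Real.exp (t * x) ∂((ENNReal.ofReal (1 / (2 * s))) • Measure.dirac (Real.sqrt s)
        + (ENNReal.ofReal (1 / (2 * s))) • Measure.dirac (-(Real.sqrt s))
        + (ENNReal.ofReal (1 - 1 / s)) • Measure.dirac (0 : ℝ)) ≤
        Real.exp ((Real.sqrt s) ^ 2 * t ^ 2 / 2)) := by
  have hs0 : 0 < s := lt_of_lt_of_le one_pos hs
  have hsq : Real.sqrt s ^ 2 = s := Real.sq_sqrt hs0.le
  have hp : (ENNReal.ofReal (1 / (2 * s))).toReal = 1 / (2 * s) :=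
    ENNReal.toReal_ofReal (by positivity)
  have hq : (ENNReal.ofReal (1 - 1 / s)).toReal = 1 - 1 / s :=
    ENNReal.toReal_ofReal (by
      have : 1 / s ≤ 1 := by rw [div_le_one hs0]; exact hs
      linarith)
  refine ⟨?_, ?_, ?_⟩
  · rw [integral_three _ _ _ _ ENNReal.ofReal_ne_top ENNReal.ofReal_ne_top ENNReal.ofReal_ne_top]
    rw [hp, hq]; ring
  · rw [integral_three _ _ _ _ ENNReal.ofReal_ne_top ENNReal.ofReal_ne_top ENNReal.ofReal_ne_top]
    rw [hp, hq, neg_pow, hsq]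
    field_simp
    ring
  · intro t
    rw [integral_three _ _ _ _ ENNReal.ofReal_ne_top ENNReal.ofReal_ne_top ENNReal.ofReal_ne_top]
    rw [hp, hq, hsq, mul_zero, Real.exp_zero]
    have hcosh : Real.exp (t * Real.sqrt s) + Real.exp (t * -(Real.sqrt s))
        = 2 * Real.cosh (t * Real.sqrt s) := by
      rw [Real.cosh_eq]; ring_nf
    have hc : Real.cosh (t * Real.sqrt s) ≤ Real.exp (s * t ^ 2 / 2) := by
      have := Real.cosh_le_exp_half_sq (t * Real.sqrt s)
      have heq : (t * Real.sqrt s) ^ 2 = s * t ^ 2 := by rw [mul_pow, hsq]; ring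
      rwa [heq] at this
    have h1 : (1 : ℝ) ≤ Real.exp (s * t ^ 2 / 2) := by
      rw [← Real.exp_zero]; exact Real.exp_le_exp.2 (by positivity)
    have hinv : 1 / s ≤ 1 := by rw [div_le_one hs0]; exact hs
    have key : 1 / (2 * s) * Real.exp (t * Real.sqrt s)
        + 1 / (2 * s) * Real.exp (t * -(Real.sqrt s)) + (1 - 1 / s) * 1
        ≤ Real.exp (s * t ^ 2 / 2) := by
      have : 1 / (2 * s) * Real.exp (t * Real.sqrt s)
          + 1 / (2 * s) * Real.exp (t * -(Real.sqrt s))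
          = (1 / s) * Real.cosh (t * Real.sqrt s) := by
        rw [eq_comm, mul_comm]
        rw [show (1:ℝ)/(2*s) * Real.exp (t * Real.sqrt s) + 1/(2*s) * Real.exp (t * -(Real.sqrt s))
            = (Real.exp (t * Real.sqrt s) + Real.exp (t * -(Real.sqrt s))) * (1/(2*s)) by ring,
          hcosh]
        field_simp
      rw [this]
      have h2 : (1 / s) * Real.cosh (t * Real.sqrt s) ≤ (1 / s) * Real.exp (s * t ^ 2 / 2) :=
        mul_le_mul_of_nonneg_left hc (by positivity)
      nlinarith [Real.cosh_pos (t * Real.sqrt s)]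
    linarith [key]
end

section
/- Let b ≥ 1/√2 and let r = (r_1, ..., r_N) have i.i.d. components with E[r_i] = 0, E[r_i²] = 1, and E[e^{t r_i}] ≤ e^{b² t² / 2} for all t ∈ ℝ. Let v ∈ ℝ^N be nonzero and define the random variable T = (r·v)² − ‖v‖², where r·v is the Euclidean inner product and ‖·‖ the Euclidean norm. Then there exist constants c with 0 < c < 1/(8 b⁴) and κ > 0, depending only on b, such that for all δ with 0 < δ ≤ κ ‖v‖², the large deviation rate satisfies sup_{t > 0} ( t δ − ln E[e^{t T}] ) ≥ c δ² / ‖v‖⁴. -/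
open MeasureTheory ProbabilityTheory Real

open Nat

set_option maxHeartbeats 1000000

lemma RMA.abs_pow_le (x : ℝ) (n : ℕ) : |x| ^ n / n ! ≤ exp x + exp (-x) := by
  have h1 : |x| ^ n / n ! ≤ exp |x| := by
    have hs := Real.sum_le_exp_of_nonneg (abs_nonneg x) (n + 1)
    refine le_trans ?_ hs
    exact Finset.single_le_sum (f := fun i => |x| ^ i / i !)
      (fun i _ => by positivity) (Finset.self_mem_range_succ n)
  have h2 : exp |x| ≤ exp x + exp (-x) := by
    rcases abs_cases x with ⟨h, _⟩ | ⟨h, _⟩ <;> rw [h] <;>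
      nlinarith [Real.exp_pos x, Real.exp_pos (-x)]
  linarith

lemma RMA.gauss_integrable (a : ℝ) :
    Integrable (fun g : ℝ => exp (-g ^ 2 + a * g)) := by
  have h : (fun g : ℝ => exp (-g ^ 2 + a * g))
      = fun g => exp (a ^ 2 / 4) * exp (-1 * (g - a / 2) ^ 2) := by
    funext g; rw [← Real.exp_add]; congr 1; ring
  rw [h]
  exact ((integrable_exp_neg_mul_sq one_pos).comp_sub_right (a / 2)).const_mul _

lemma RMA.gauss_integral (a : ℝ) :
    ∫ g : ℝ, exp (-g ^ 2 + a * g) = Real.sqrt π * exp (a ^ 2 / 4) := by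
  have h : (fun g : ℝ => exp (-g ^ 2 + a * g))
      = fun g => exp (a ^ 2 / 4) * exp (-1 * (g - a / 2) ^ 2) := by
    funext g; rw [← Real.exp_add]; congr 1; ring
  rw [h, MeasureTheory.integral_const_mul]
  have := MeasureTheory.integral_sub_right_eq_self (μ := volume)
    (fun g : ℝ => exp (-1 * g ^ 2)) (a / 2)
  rw [this, integral_gaussian, div_one]
  ring

lemma RMA.subg_sq {Ω : Type} [MeasurableSpace Ω] (μ : Measure Ω) [IsProbabilityMeasure μ]
    (X : Ω → ℝ) (hX : Measurable X) (B s : ℝ) (hB : 0 ≤ B) (hs : 0 ≤ s)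
    (hsB : s * B ≤ 1 / 4)
    (hint : ∀ l : ℝ, Integrable (fun ω => exp (l * X ω)) μ)
    (hbnd : ∀ l : ℝ, ∫ ω, exp (l * X ω) ∂μ ≤ exp (B * l ^ 2 / 2)) :
    Integrable (fun ω => exp (s * X ω ^ 2)) μ ∧ ∫ ω, exp (s * X ω ^ 2) ∂μ ≤ 2 := by
  have hπ : (0:ℝ) < Real.sqrt π := Real.sqrt_pos.mpr Real.pi_pos
  have hπ0 : ENNReal.ofReal (Real.sqrt π) ≠ 0 := by
    simp [ENNReal.ofReal_eq_zero, not_le, hπ]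
  have hx1 : (0:ℝ) < 1 - 2 * s * B := by nlinarith
  -- pointwise Gaussian representation
  have hA : ∀ x : ℝ, ENNReal.ofReal (exp (s * x ^ 2)) =
      (ENNReal.ofReal (Real.sqrt π))⁻¹ *
        ∫⁻ g : ℝ, ENNReal.ofReal (exp (-g ^ 2 + (2 * Real.sqrt s * x) * g)) := by
    intro x
    rw [← MeasureTheory.ofReal_integral_eq_lintegral_ofReal (RMA.gauss_integrable _)
      (Filter.Eventually.of_forall fun g => (Real.exp_nonneg _))]
    rw [RMA.gauss_integral]
    have hsq : (2 * Real.sqrt s * x) ^ 2 / 4 = s * x ^ 2 := by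
      rw [mul_pow, mul_pow, Real.sq_sqrt hs]; ring
    rw [hsq, ENNReal.ofReal_mul hπ.le, ← mul_assoc,
      ENNReal.inv_mul_cancel hπ0 ENNReal.ofReal_ne_top, one_mul]
  have hmeas : Measurable fun ω => exp (s * X ω ^ 2) :=
    ((hX.pow_const 2).const_mul s).exp
  have hswapmeas : AEMeasurable
      (fun p : Ω × ℝ => ENNReal.ofReal (exp (-p.2 ^ 2 + (2 * Real.sqrt s * X p.1) * p.2)))
      (μ.prod volume) := by
    apply Measurable.aemeasurable
    apply ENNReal.measurable_ofReal.comp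
    exact (((measurable_snd.pow_const 2).neg).add
      (((hX.comp measurable_fst).const_mul (2 * Real.sqrt s)).mul measurable_snd)).exp
  have hchain : ∫⁻ ω, ENNReal.ofReal (exp (s * X ω ^ 2)) ∂μ ≤ ENNReal.ofReal 2 := by
    calc ∫⁻ ω, ENNReal.ofReal (exp (s * X ω ^ 2)) ∂μ
        = ∫⁻ ω, ((ENNReal.ofReal (Real.sqrt π))⁻¹ *
            ∫⁻ g : ℝ, ENNReal.ofReal (exp (-g ^ 2 + (2 * Real.sqrt s * X ω) * g))) ∂μ :=
          lintegral_congr fun ω => hA (X ω)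
      _ = (ENNReal.ofReal (Real.sqrt π))⁻¹ *
            ∫⁻ ω, (∫⁻ g : ℝ, ENNReal.ofReal (exp (-g ^ 2 + (2 * Real.sqrt s * X ω) * g))) ∂μ :=
          lintegral_const_mul' _ _ (by simp [Real.pi_pos])
      _ = (ENNReal.ofReal (Real.sqrt π))⁻¹ *
            ∫⁻ g : ℝ, ∫⁻ ω, ENNReal.ofReal (exp (-g ^ 2 + (2 * Real.sqrt s * X ω) * g)) ∂μ := by
          rw [MeasureTheory.lintegral_lintegral_swap hswapmeas]
      _ ≤ (ENNReal.ofReal (Real.sqrt π))⁻¹ *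
            ∫⁻ g : ℝ, ENNReal.ofReal (exp (-(1 - 2 * s * B) * g ^ 2)) := by
          refine mul_le_mul_right (lintegral_mono fun g => ?_) _
          have hrw : ∀ ω, exp (-g ^ 2 + (2 * Real.sqrt s * X ω) * g)
              = exp (-g ^ 2) * exp ((2 * Real.sqrt s * g) * X ω) := by
            intro ω; rw [← Real.exp_add]; congr 1; ring
          simp_rw [hrw, ENNReal.ofReal_mul (Real.exp_nonneg _)]
          rw [lintegral_const_mul' _ _ ENNReal.ofReal_ne_top]
          rw [← MeasureTheory.ofReal_integral_eq_lintegral_ofReal (hint _)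
            (Filter.Eventually.of_forall fun ω => Real.exp_nonneg _)]
          calc ENNReal.ofReal (exp (-g ^ 2)) *
                ENNReal.ofReal (∫ ω, exp ((2 * Real.sqrt s * g) * X ω) ∂μ)
              ≤ ENNReal.ofReal (exp (-g ^ 2)) *
                ENNReal.ofReal (exp (B * (2 * Real.sqrt s * g) ^ 2 / 2)) :=
                mul_le_mul_right (ENNReal.ofReal_le_ofReal (hbnd _)) _
            _ = ENNReal.ofReal (exp (-(1 - 2 * s * B) * g ^ 2)) := by
                rw [← ENNReal.ofReal_mul (Real.exp_nonneg _), ← Real.exp_add]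
                congr 2
                rw [mul_pow, mul_pow, Real.sq_sqrt hs]; ring
      _ = (ENNReal.ofReal (Real.sqrt π))⁻¹ *
            ENNReal.ofReal (Real.sqrt (π / (1 - 2 * s * B))) := by
          rw [← MeasureTheory.ofReal_integral_eq_lintegral_ofReal
            (integrable_exp_neg_mul_sq hx1)
            (Filter.Eventually.of_forall fun g => Real.exp_nonneg _),
            integral_gaussian]
      _ ≤ ENNReal.ofReal 2 := by
          have hc : Real.sqrt (π / (1 - 2 * s * B)) ≤ Real.sqrt π * 2 := by
            have h4 : π / (1 - 2 * s * B) ≤ 4 * π := by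
              rw [div_le_iff₀ hx1]; nlinarith [Real.pi_pos]
            calc Real.sqrt (π / (1 - 2 * s * B)) ≤ Real.sqrt (4 * π) :=
                  Real.sqrt_le_sqrt h4
              _ = Real.sqrt π * 2 := by
                  rw [show (4:ℝ) * π = 2 ^ 2 * π by norm_num,
                    Real.sqrt_mul (by positivity), Real.sqrt_sq (by norm_num : (0:ℝ) ≤ 2)]
                  ring
          calc (ENNReal.ofReal (Real.sqrt π))⁻¹ *
                ENNReal.ofReal (Real.sqrt (π / (1 - 2 * s * B)))
              ≤ (ENNReal.ofReal (Real.sqrt π))⁻¹ *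
                (ENNReal.ofReal (Real.sqrt π) * ENNReal.ofReal 2) := by
                refine mul_le_mul_right ?_ _
                rw [← ENNReal.ofReal_mul hπ.le]
                exact ENNReal.ofReal_le_ofReal (by simpa using hc)
            _ = ENNReal.ofReal 2 := by
                rw [← mul_assoc, ENNReal.inv_mul_cancel hπ0 ENNReal.ofReal_ne_top, one_mul]
  have hnn : 0 ≤ᵐ[μ] fun ω => exp (s * X ω ^ 2) :=
    Filter.Eventually.of_forall fun ω => Real.exp_nonneg _
  have hintf : Integrable (fun ω => exp (s * X ω ^ 2)) μ := by
    refine ⟨hmeas.aestronglyMeasurable, ?_⟩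
    rw [MeasureTheory.hasFiniteIntegral_iff_ofReal hnn]
    exact lt_of_le_of_lt hchain ENNReal.ofReal_lt_top
  refine ⟨hintf, ?_⟩
  rw [MeasureTheory.integral_eq_lintegral_of_nonneg_ae hnn hmeas.aestronglyMeasurable]
  exact ENNReal.toReal_le_of_le_ofReal (by norm_num) hchain

/-- **Main large-deviation theorem for the randomized misfit (Section 3.1).**
Let `b ≥ 1/√2`.  There exist constants `c` with `0 < c < 1/(8b⁴)` and `κ > 0`,
depending only on `b`, such that: whenever `r = (r 1, ..., r N)` has i.i.d. components with
mean `0`, second moment `1` and `E[exp (t * r i)] ≤ exp (b² t² / 2)` for all `t`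
(`b`-subgaussian), `v ∈ ℝ^N` is nonzero, and `T = (r·v)² - ‖v‖²`, then for all
`0 < δ ≤ κ ‖v‖²` the large deviation rate satisfies
`sup_{t>0} (tδ - ln E[exp (t T)]) ≥ c δ² / ‖v‖⁴` (witnessed by some `t > 0` at which the
moment generating function is finite).  Here `‖v‖² = ∑ i, (v i)²` and `r·v = ∑ i, r i * v i`. -/
theorem randomized_misfit_large_deviation_rate (b : ℝ) (hb : 1 / Real.sqrt 2 ≤ b) :
    ∃ c κ : ℝ, 0 < c ∧ c < 1 / (8 * b ^ 4) ∧ 0 < κ ∧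
      ∀ {Ω : Type} [MeasurableSpace Ω] (μ : Measure Ω), IsProbabilityMeasure μ →
      ∀ (N : ℕ) (r : Fin N → Ω → ℝ),
        (∀ i, Measurable (r i)) →
        iIndepFun r μ →
        (∀ i j, IdentDistrib (r i) (r j) μ μ) →
        (∀ i, ∫ ω, r i ω ∂μ = 0) →
        (∀ i, ∫ ω, (r i ω) ^ 2 ∂μ = 1) →
        (∀ i (t : ℝ), Integrable (fun ω => Real.exp (t * r i ω)) μ) →
        (∀ i (t : ℝ), ∫ ω, Real.exp (t * r i ω) ∂μ ≤ Real.exp (b ^ 2 * t ^ 2 / 2)) →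
      ∀ v : Fin N → ℝ, v ≠ 0 →
      ∀ δ : ℝ, 0 < δ → δ ≤ κ * ∑ i, (v i) ^ 2 →
      ∃ t : ℝ, 0 < t ∧
        Integrable (fun ω =>
          Real.exp (t * ((∑ i, r i ω * v i) ^ 2 - ∑ i, (v i) ^ 2))) μ ∧
        c * δ ^ 2 / (∑ i, (v i) ^ 2) ^ 2 ≤
          t * δ - Real.log (∫ ω,
            Real.exp (t * ((∑ i, r i ω * v i) ^ 2 - ∑ i, (v i) ^ 2)) ∂μ) := by
  have hs2 : (0:ℝ) < Real.sqrt 2 := Real.sqrt_pos.mpr two_pos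
  have hbpos : 0 < b := lt_of_lt_of_le (by positivity) hb
  have hb2 : (1:ℝ) / 2 ≤ b ^ 2 := by
    have h := pow_le_pow_left₀ (by positivity) hb 2
    rwa [div_pow, one_pow, Real.sq_sqrt (by norm_num : (0:ℝ) ≤ 2)] at h
  refine ⟨1 / (322564 * b ^ 4), 1, by positivity, ?_, one_pos, ?_⟩
  · apply div_lt_div_of_pos_left one_pos (by positivity)
    nlinarith [pow_pos hbpos 4]
  intro Ω _ μ hμ N r hmeas hind _hident hmean hvar hint2 hbnd2 v hv δ hδ hδle
  -- setup
  set S : ℝ := ∑ i, (v i) ^ 2 with hSdef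
  have hSpos : 0 < S := by
    rcases Function.ne_iff.mp hv with ⟨i, hi⟩
    exact Finset.sum_pos' (fun j _ => sq_nonneg _)
      ⟨i, Finset.mem_univ i, lt_of_le_of_ne (sq_nonneg _) (Ne.symm (pow_ne_zero 2 hi))⟩
  rw [one_mul] at hδle
  set X : Ω → ℝ := fun ω => ∑ i, r i ω * v i with hXdef
  have hXm : Measurable X :=
    Finset.measurable_sum _ fun i _ => (hmeas i).mul_const _
  set Y : Fin N → Ω → ℝ := fun i ω => r i ω * v i with hYdef
  have hYm : ∀ i, Measurable (Y i) := fun i => (hmeas i).mul_const _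
  have hYind : iIndepFun Y μ :=
    hind.comp (fun i x => x * v i) (fun i => measurable_mul_const _)
  have hXY : ∀ ω, X ω = (∑ i, Y i) ω := by
    intro ω; simp [hXdef, hYdef, Finset.sum_apply]
  -- L1 : mgf of X
  have hmgf_int : ∀ l : ℝ, Integrable (fun ω => exp (l * X ω)) μ := by
    intro l
    have h := hYind.integrable_exp_mul_sum (t := l) hYm
      (s := Finset.univ) (fun i _ => by
        have := hint2 i (l * v i)
        refine this.congr (Filter.Eventually.of_forall fun ω => ?_)
        simp [hYdef]; ring_nf)
    refine h.congr (Filter.Eventually.of_forall fun ω => ?_)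
    show exp (l * (∑ i, Y i) ω) = exp (l * X ω)
    rw [hXY ω]
  have hmgf_bnd : ∀ l : ℝ, ∫ ω, exp (l * X ω) ∂μ ≤ exp (b ^ 2 * S * l ^ 2 / 2) := by
    intro l
    have hrw : ∫ ω, exp (l * X ω) ∂μ = mgf (∑ i, Y i) μ l := by
      unfold mgf
      exact integral_congr_ae (Filter.Eventually.of_forall fun ω => by
        show exp (l * X ω) = exp (l * (∑ i, Y i) ω)
        rw [hXY ω])
    rw [hrw, hYind.mgf_sum hYm]
    calc ∏ i, mgf (Y i) μ l ≤ ∏ i, exp (b ^ 2 * (l * v i) ^ 2 / 2) := by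
          refine Finset.prod_le_prod (fun i _ => mgf_nonneg) (fun i _ => ?_)
          have h1 : mgf (Y i) μ l = ∫ ω, exp ((l * v i) * r i ω) ∂μ := by
            unfold mgf
            exact integral_congr_ae (Filter.Eventually.of_forall fun ω => by
              simp [hYdef]; ring_nf)
          rw [h1]; exact hbnd2 i (l * v i)
      _ = exp (b ^ 2 * S * l ^ 2 / 2) := by
          rw [← Real.exp_sum]
          congr 1
          rw [hSdef]
          simp only [Finset.mul_sum, Finset.sum_mul, Finset.sum_div]
          exact Finset.sum_congr rfl fun i _ => by ring
  -- integrability of powers of r i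
  have hri_int : ∀ i, Integrable (r i) μ := by
    intro i
    refine Integrable.mono' ((hint2 i 1).add (hint2 i (-1)))
      (hmeas i).aestronglyMeasurable (Filter.Eventually.of_forall fun ω => ?_)
    have := RMA.abs_pow_le (r i ω) 1
    simp only [pow_one, factorial_one, Nat.cast_one, div_one] at this
    simpa [Real.norm_eq_abs, one_mul, neg_one_mul] using this
  have hri2_int : ∀ i, Integrable (fun ω => r i ω ^ 2) μ := by
    intro i
    refine Integrable.mono' (((hint2 i 1).add (hint2 i (-1))).const_mul 2)
      ((hmeas i).pow_const 2).aestronglyMeasurable (Filter.Eventually.of_forall fun ω => ?_)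
    have h := RMA.abs_pow_le (r i ω) 2
    have h2 : ((2:ℕ)! : ℝ) = 2 := by norm_num [Nat.factorial]
    rw [h2, sq_abs, div_le_iff₀ (by norm_num : (0:ℝ) < 2)] at h
    have : ‖r i ω ^ 2‖ = r i ω ^ 2 := by
      rw [Real.norm_eq_abs, abs_of_nonneg (sq_nonneg _)]
    rw [this]
    calc r i ω ^ 2 ≤ (exp (r i ω) + exp (-r i ω)) * 2 := h
      _ = 2 * (exp (1 * r i ω) + exp (-1 * r i ω)) := by rw [one_mul, neg_one_mul]; ring
  have hY_int : ∀ i, Integrable (Y i) μ := fun i => (hri_int i).mul_const _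
  have hY2_int : ∀ i, Integrable (fun ω => Y i ω ^ 2) μ := by
    intro i
    have : (fun ω => Y i ω ^ 2) = fun ω => (v i) ^ 2 * r i ω ^ 2 := by
      funext ω; simp [hYdef]; ring
    rw [this]; exact (hri2_int i).const_mul _
  have hYY_int : ∀ i j, Integrable (fun ω => Y i ω * Y j ω) μ := by
    intro i j
    refine Integrable.mono' (((hY2_int i).add (hY2_int j)).const_mul (1/2))
      ((hYm i).mul (hYm j)).aestronglyMeasurable
      (Filter.Eventually.of_forall fun ω => ?_)
    rw [Real.norm_eq_abs, abs_mul]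
    simp only [Pi.add_apply]
    have h1 := sq_nonneg (|Y i ω| - |Y j ω|)
    have h2 : |Y i ω| ^ 2 = Y i ω ^ 2 := sq_abs _
    have h3 : |Y j ω| ^ 2 = Y j ω ^ 2 := sq_abs _
    nlinarith [abs_nonneg (Y i ω), abs_nonneg (Y j ω)]
  -- L3 : E[X^2] = S
  have hEX2 : ∫ ω, X ω ^ 2 ∂μ = S := by
    have hXsq : ∀ ω, X ω ^ 2 = ∑ i, ∑ j, Y i ω * Y j ω := by
      intro ω
      rw [hXY ω, Finset.sum_apply, sq, Finset.sum_mul_sum]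
    rw [integral_congr_ae (Filter.Eventually.of_forall fun ω => hXsq ω)]
    rw [integral_finset_sum _ (fun i _ => integrable_finset_sum _ (fun j _ => hYY_int i j))]
    have hinner : ∀ i, ∫ ω, ∑ j, Y i ω * Y j ω ∂μ = (v i) ^ 2 := by
      intro i
      rw [integral_finset_sum _ (fun j _ => hYY_int i j)]
      have hterm : ∀ j, ∫ ω, Y i ω * Y j ω ∂μ = if j = i then (v i) ^ 2 else 0 := by
        intro j
        by_cases hji : j = i
        · subst hji
          have heq : ∫ ω, Y j ω * Y j ω ∂μ = (v j) ^ 2 := by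
            have h0 : (fun ω => Y j ω * Y j ω) = fun ω => (v j) ^ 2 * r j ω ^ 2 := by
              funext ω; simp only [hYdef]; ring
            rw [integral_congr_ae (Filter.Eventually.of_forall fun ω => by
                rw [congrFun h0 ω]),
              MeasureTheory.integral_const_mul, hvar j, mul_one]
          simp [heq]
        · simp only [if_neg hji]
          have hIndep : IndepFun (Y i) (Y j) μ :=
            (hind.indepFun (fun h => hji (h.symm ▸ rfl) : i ≠ j)).comp
              (measurable_mul_const (v i)) (measurable_mul_const (v j))
          have h := hIndep.integral_mul_eq_mul_integral (hY_int i).aestronglyMeasurable (hY_int j).aestronglyMeasurable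
          have hYj : ∫ ω, Y j ω ∂μ = 0 := by
            simp only [hYdef]
            rw [integral_mul_const, hmean j, zero_mul]
          calc ∫ ω, Y i ω * Y j ω ∂μ = ∫ ω, (Y i * Y j) ω ∂μ := rfl
            _ = (∫ ω, Y i ω ∂μ) * ∫ ω, Y j ω ∂μ := h
            _ = 0 := by rw [hYj, mul_zero]
      rw [Finset.sum_congr rfl fun j _ => hterm j]
      simp
    rw [Finset.sum_congr rfl fun i _ => hinner i]
  -- constants
  have hA : 0 < b ^ 2 * S := by positivity
  have hehalf : exp (1/2 : ℝ) ≤ 2 := by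
    have he : exp (1/2 : ℝ) * exp (1/2 : ℝ) = exp 1 := by
      rw [← Real.exp_add]; norm_num
    nlinarith [Real.exp_one_lt_d9, Real.exp_pos (1/2 : ℝ)]
  -- L2 : eighth moment
  set l : ℝ := (Real.sqrt (b ^ 2 * S))⁻¹ with hldef
  have hlpos : 0 < l := by rw [hldef]; positivity
  have hl2 : l ^ 2 = (b ^ 2 * S)⁻¹ := by
    rw [hldef, inv_pow, Real.sq_sqrt hA.le]
  have hl8 : l ^ 8 = ((b ^ 2 * S) ^ 4)⁻¹ := by
    rw [show (8:ℕ) = 2*4 from rfl, pow_mul, hl2, inv_pow]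
  have hbound8 : ∀ x : ℝ, x ^ 8 ≤ 40320 * (b ^ 2 * S) ^ 4 * (exp (l * x) + exp ((-l) * x)) := by
    intro x
    have h := RMA.abs_pow_le (l * x) 8
    have h8 : ((8:ℕ)! : ℝ) = 40320 := by norm_num [Nat.factorial]
    rw [h8, div_le_iff₀ (by norm_num : (0:ℝ) < 40320)] at h
    have habs : |l * x| ^ 8 = l ^ 8 * x ^ 8 := by
      rw [← abs_pow, abs_of_nonneg (by positivity : (0:ℝ) ≤ (l * x) ^ 8), mul_pow]
    have hAl : (b ^ 2 * S) ^ 4 * l ^ 8 = 1 := by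
      rw [hl8]; field_simp
    calc x ^ 8 = (b ^ 2 * S) ^ 4 * (l ^ 8 * x ^ 8) := by
          rw [← mul_assoc, hAl, one_mul]
      _ = (b ^ 2 * S) ^ 4 * |l * x| ^ 8 := by rw [habs]
      _ ≤ (b ^ 2 * S) ^ 4 * ((exp (l * x) + exp (-(l * x))) * 40320) :=
          mul_le_mul_of_nonneg_left h (by positivity)
      _ = 40320 * (b ^ 2 * S) ^ 4 * (exp (l * x) + exp ((-l) * x)) := by
          rw [neg_mul]; ring
  have hX8_int : Integrable (fun ω => X ω ^ 8) μ := by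
    refine Integrable.mono' (((hmgf_int l).add (hmgf_int (-l))).const_mul
        (40320 * (b ^ 2 * S) ^ 4))
      (hXm.pow_const 8).aestronglyMeasurable (Filter.Eventually.of_forall fun ω => ?_)
    simp only [Pi.add_apply]
    rw [Real.norm_eq_abs, abs_of_nonneg (by positivity : (0:ℝ) ≤ X ω ^ 8)]
    exact hbound8 (X ω)
  have hEX8 : ∫ ω, X ω ^ 8 ∂μ ≤ 161280 * (b ^ 2 * S) ^ 4 := by
    have hmb : ∀ l' : ℝ, l' ^ 2 = (b ^ 2 * S)⁻¹ → ∫ ω, exp (l' * X ω) ∂μ ≤ 2 := by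
      intro l' hl'
      calc ∫ ω, exp (l' * X ω) ∂μ ≤ exp (b ^ 2 * S * l' ^ 2 / 2) := hmgf_bnd l'
        _ = exp (1/2 : ℝ) := by
            congr 1; rw [hl']; field_simp
        _ ≤ 2 := hehalf
    have hb1 := hmb l hl2
    have hb2 := hmb (-l) ((neg_sq l).trans hl2)
    have hgi : Integrable (fun ω => 40320 * (b ^ 2 * S) ^ 4 *
        (exp (l * X ω) + exp ((-l) * X ω))) μ :=
      ((hmgf_int l).add (hmgf_int (-l))).const_mul _
    calc ∫ ω, X ω ^ 8 ∂μ
        ≤ ∫ ω, 40320 * (b ^ 2 * S) ^ 4 * (exp (l * X ω) + exp ((-l) * X ω)) ∂μ :=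
          integral_mono hX8_int hgi (fun ω => hbound8 (X ω))
      _ = 40320 * (b ^ 2 * S) ^ 4 *
            ((∫ ω, exp (l * X ω) ∂μ) + ∫ ω, exp ((-l) * X ω) ∂μ) := by
          rw [MeasureTheory.integral_const_mul, integral_add (hmgf_int l) (hmgf_int (-l))]
      _ ≤ 40320 * (b ^ 2 * S) ^ 4 * (2 + 2) := by
          refine mul_le_mul_of_nonneg_left ?_ (by positivity)
          linarith
      _ = 161280 * (b ^ 2 * S) ^ 4 := by ring
  -- X^2 integrable
  have hX2_int : Integrable (fun ω => X ω ^ 2) μ := by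
    refine Integrable.mono' (((hmgf_int 1).add (hmgf_int (-1))).const_mul 2)
      (hXm.pow_const 2).aestronglyMeasurable (Filter.Eventually.of_forall fun ω => ?_)
    simp only [Pi.add_apply]
    have h := RMA.abs_pow_le (X ω) 2
    have h2 : ((2:ℕ)! : ℝ) = 2 := by norm_num [Nat.factorial]
    rw [h2, sq_abs, div_le_iff₀ (by norm_num : (0:ℝ) < 2)] at h
    rw [Real.norm_eq_abs, abs_of_nonneg (sq_nonneg _)]
    simp only [one_mul, neg_one_mul]
    linarith
  -- choose t
  set t : ℝ := δ / (161282 * b ^ 4 * S ^ 2) with htdef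
  have htpos : 0 < t := by rw [htdef]; positivity
  have ht2A : 2 * t * (b ^ 2 * S) ≤ 1 / 4 := by
    have h1 : 2 * t * (b ^ 2 * S) = δ / (80641 * b ^ 2 * S) := by
      rw [htdef]; field_simp; ring
    rw [h1, div_le_iff₀ (by positivity)]
    nlinarith
  have htA : t * (b ^ 2 * S) ≤ 1 / 4 := by nlinarith [mul_pos htpos hA]
  obtain ⟨hIt_int, _⟩ := RMA.subg_sq μ X hXm (b ^ 2 * S) t hA.le htpos.le htA
    hmgf_int hmgf_bnd
  obtain ⟨hI2t_int, hI2t_le⟩ := RMA.subg_sq μ X hXm (b ^ 2 * S) (2 * t) hA.le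
    (by linarith) ht2A hmgf_int hmgf_bnd
  -- master pointwise bound
  have hDpos : 0 < b ^ 4 * S ^ 2 := by positivity
  have hmaster : ∀ x : ℝ, exp (t * x ^ 2) ≤ 1 + t * x ^ 2
      + t ^ 2 / (2 * (b ^ 4 * S ^ 2)) * x ^ 8
      + t ^ 2 * (b ^ 4 * S ^ 2) / 2 * exp (2 * t * x ^ 2) := by
    intro x
    have hE1pos : 0 < exp (t * x ^ 2) := Real.exp_pos _
    have hE2 : exp (2 * t * x ^ 2) = exp (t * x ^ 2) ^ 2 := by
      rw [show (2:ℝ) * t * x ^ 2 = t * x ^ 2 + t * x ^ 2 by ring, Real.exp_add]; ring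
    have h1 : exp (t * x ^ 2) ≤ 1 + (t * x ^ 2) * exp (t * x ^ 2) := by
      have h := Real.add_one_le_exp (-(t * x ^ 2))
      have h2 := mul_le_mul_of_nonneg_left h hE1pos.le
      rw [← Real.exp_add] at h2
      simp only [add_neg_cancel, Real.exp_zero] at h2
      nlinarith
    have hy : 0 ≤ t * x ^ 2 := by positivity
    have hAM : x ^ 4 * exp (t * x ^ 2) ≤ x ^ 8 / (2 * (b ^ 4 * S ^ 2))
        + (b ^ 4 * S ^ 2) * exp (t * x ^ 2) ^ 2 / 2 := by
      have hiden : x ^ 8 / (2 * (b ^ 4 * S ^ 2))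
          + (b ^ 4 * S ^ 2) * exp (t * x ^ 2) ^ 2 / 2 - x ^ 4 * exp (t * x ^ 2)
          = (x ^ 4 - (b ^ 4 * S ^ 2) * exp (t * x ^ 2)) ^ 2 / (2 * (b ^ 4 * S ^ 2)) := by
        field_simp; ring
      have hnn : 0 ≤ (x ^ 4 - (b ^ 4 * S ^ 2) * exp (t * x ^ 2)) ^ 2
          / (2 * (b ^ 4 * S ^ 2)) := by positivity
      linarith [hiden ▸ hnn]
    rw [hE2]
    have h2 := mul_le_mul_of_nonneg_left h1 hy
    have h3 := mul_le_mul_of_nonneg_left hAM (sq_nonneg t)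
    have h2' : t * x ^ 2 * exp (t * x ^ 2)
        ≤ t * x ^ 2 + t ^ 2 * (x ^ 4 * exp (t * x ^ 2)) := by nlinarith [h2]
    have h3' : t ^ 2 * (x ^ 4 * exp (t * x ^ 2)) ≤ t ^ 2 / (2 * (b ^ 4 * S ^ 2)) * x ^ 8
        + t ^ 2 * (b ^ 4 * S ^ 2) / 2 * exp (t * x ^ 2) ^ 2 := by
      have hexp : t ^ 2 * (x ^ 8 / (2 * (b ^ 4 * S ^ 2))
            + (b ^ 4 * S ^ 2) * exp (t * x ^ 2) ^ 2 / 2)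
          = t ^ 2 / (2 * (b ^ 4 * S ^ 2)) * x ^ 8
            + t ^ 2 * (b ^ 4 * S ^ 2) / 2 * exp (t * x ^ 2) ^ 2 := by
        field_simp
      linarith [hexp ▸ h3]
    linarith [h1, h2', h3']
  -- integral bound
  have hIbnd : ∫ ω, exp (t * X ω ^ 2) ∂μ ≤ 1 + t * S + 80641 * b ^ 4 * t ^ 2 * S ^ 2 := by
    have hg1 : Integrable (fun ω => 1 + t * X ω ^ 2) μ :=
      (integrable_const 1).add (hX2_int.const_mul t)
    have hg2 : Integrable (fun ω => 1 + t * X ω ^ 2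
        + t ^ 2 / (2 * (b ^ 4 * S ^ 2)) * X ω ^ 8) μ :=
      hg1.add (hX8_int.const_mul _)
    have hg3 : Integrable (fun ω => 1 + t * X ω ^ 2
        + t ^ 2 / (2 * (b ^ 4 * S ^ 2)) * X ω ^ 8
        + t ^ 2 * (b ^ 4 * S ^ 2) / 2 * exp (2 * t * X ω ^ 2)) μ :=
      hg2.add (hI2t_int.const_mul _)
    have hmono := integral_mono hIt_int hg3 (fun ω => hmaster (X ω))
    have hcalc : ∫ ω, (1 + t * X ω ^ 2
        + t ^ 2 / (2 * (b ^ 4 * S ^ 2)) * X ω ^ 8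
        + t ^ 2 * (b ^ 4 * S ^ 2) / 2 * exp (2 * t * X ω ^ 2)) ∂μ
        = 1 + t * (∫ ω, X ω ^ 2 ∂μ)
          + t ^ 2 / (2 * (b ^ 4 * S ^ 2)) * (∫ ω, X ω ^ 8 ∂μ)
          + t ^ 2 * (b ^ 4 * S ^ 2) / 2 * (∫ ω, exp (2 * t * X ω ^ 2) ∂μ) := by
      rw [integral_add hg2 (hI2t_int.const_mul _), integral_add hg1 (hX8_int.const_mul _),
        integral_add (integrable_const 1) (hX2_int.const_mul t),
        MeasureTheory.integral_const_mul, MeasureTheory.integral_const_mul,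
        MeasureTheory.integral_const_mul]
      simp [measure_univ]
    rw [hcalc] at hmono
    have hfinal : 1 + t * (∫ ω, X ω ^ 2 ∂μ)
          + t ^ 2 / (2 * (b ^ 4 * S ^ 2)) * (∫ ω, X ω ^ 8 ∂μ)
          + t ^ 2 * (b ^ 4 * S ^ 2) / 2 * (∫ ω, exp (2 * t * X ω ^ 2) ∂μ)
        ≤ 1 + t * S + 80641 * b ^ 4 * t ^ 2 * S ^ 2 := by
      rw [hEX2]
      have h8 : t ^ 2 / (2 * (b ^ 4 * S ^ 2)) * (∫ ω, X ω ^ 8 ∂μ)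
          ≤ t ^ 2 / (2 * (b ^ 4 * S ^ 2)) * (161280 * (b ^ 2 * S) ^ 4) :=
        mul_le_mul_of_nonneg_left hEX8 (by positivity)
      have he2 : t ^ 2 * (b ^ 4 * S ^ 2) / 2 * (∫ ω, exp (2 * t * X ω ^ 2) ∂μ)
          ≤ t ^ 2 * (b ^ 4 * S ^ 2) / 2 * 2 :=
        mul_le_mul_of_nonneg_left hI2t_le (by positivity)
      have hid : t ^ 2 / (2 * (b ^ 4 * S ^ 2)) * (161280 * (b ^ 2 * S) ^ 4)
          + t ^ 2 * (b ^ 4 * S ^ 2) / 2 * 2 = 80641 * b ^ 4 * t ^ 2 * S ^ 2 := by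
        field_simp; ring
      linarith
    linarith
  -- final assembly
  refine ⟨t, htpos, ?_, ?_⟩
  · show Integrable (fun ω => exp (t * (X ω ^ 2 - S))) μ
    have hfuneq : (fun ω => exp (t * (X ω ^ 2 - S)))
        = fun ω => exp (-(t * S)) * exp (t * X ω ^ 2) := by
      funext ω; rw [← Real.exp_add]; congr 1; ring
    rw [hfuneq]
    exact hIt_int.const_mul _
  · show (1 / (322564 * b ^ 4)) * δ ^ 2 / S ^ 2
      ≤ t * δ - Real.log (∫ ω, exp (t * (X ω ^ 2 - S)) ∂μ)
    have hIpos : 0 < ∫ ω, exp (t * X ω ^ 2) ∂μ := by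
      have hone : (1:ℝ) ≤ ∫ ω, exp (t * X ω ^ 2) ∂μ := by
        have h := integral_mono (integrable_const 1) hIt_int
          (fun ω => Real.one_le_exp (by positivity))
        simpa [measure_univ] using h
      linarith
    have hfuneq : (fun ω => exp (t * (X ω ^ 2 - S)))
        = fun ω => exp (-(t * S)) * exp (t * X ω ^ 2) := by
      funext ω; rw [← Real.exp_add]; congr 1; ring
    rw [hfuneq, MeasureTheory.integral_const_mul,
      Real.log_mul (Real.exp_ne_zero _) (ne_of_gt hIpos), Real.log_exp]
    have hlogI : Real.log (∫ ω, exp (t * X ω ^ 2) ∂μ)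
        ≤ t * S + 80641 * b ^ 4 * t ^ 2 * S ^ 2 := by
      have h := Real.log_le_sub_one_of_pos hIpos
      linarith
    have hkey : 1 / (322564 * b ^ 4) * δ ^ 2 / S ^ 2
        = t * δ - 80641 * b ^ 4 * t ^ 2 * S ^ 2 := by
      rw [htdef]; field_simp; ring
    linarith
end

section
/- Let 0 < b ≤ 1 and let r_1, ..., r_N be i.i.d. real random variables with E[r_i] = 0 and E[e^{t r_i}] ≤ e^{b² t² / 2} for all t ∈ ℝ. Let w ∈ ℝ^N satisfy Σ_{i=1}^N w_i² = 1 and set X = Σ_{i=1}^N w_i r_i. Then for every t with 0 ≤ t < 1/2, E[e^{t X²}] ≤ 1/√(1 − 2t). -/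
open MeasureTheory ProbabilityTheory Real
open scoped ENNReal

lemma gauss_shift_integrable (a : ℝ) :
    Integrable (fun g : ℝ => Real.exp (a * g) * Real.exp (-g ^ 2 / 2)) := by
  have h : ∀ g : ℝ, Real.exp (a * g) * Real.exp (-g ^ 2 / 2)
      = Real.exp (a ^ 2 / 2) * Real.exp (-(1/2) * (g - a) ^ 2) := by
    intro g
    rw [← Real.exp_add, ← Real.exp_add]
    ring_nf
  simp_rw [h]
  exact ((integrable_exp_neg_mul_sq (by norm_num : (0:ℝ) < 1/2)).comp_sub_right a).const_mul _

lemma gauss_mgf (a : ℝ) :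
    ∫ g : ℝ, Real.exp (a * g) * Real.exp (-g ^ 2 / 2)
      = Real.sqrt (2 * π) * Real.exp (a ^ 2 / 2) := by
  have h : ∀ g : ℝ, Real.exp (a * g) * Real.exp (-g ^ 2 / 2)
      = Real.exp (a ^ 2 / 2) * Real.exp (-(1/2) * (g - a) ^ 2) := by
    intro g
    rw [← Real.exp_add, ← Real.exp_add]
    ring_nf
  simp_rw [h]
  rw [integral_const_mul]
  rw [integral_sub_right_eq_self (fun g : ℝ => Real.exp (-(1/2) * g ^ 2)) a,
    integral_gaussian]
  rw [mul_comm]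
  congr 1
  rw [div_div_eq_mul_div, div_one, mul_comm]

/-- **Gaussian-comparison MGF bound for `b ≤ 1` (Section 3.1).**
Let `0 < b ≤ 1` and let `r 1, ..., r N` be i.i.d. real random variables with mean `0` and
`E[exp (t * r i)] ≤ exp (b² t² / 2)` for all `t` (`b`-subgaussian).  Let `w ∈ ℝ^N` with
`∑ i, (w i)² = 1` and set `X = ∑ i, w i * r i`.  Then for every `t` with `0 ≤ t < 1/2`,
`E[exp (t X²)] ≤ 1/√(1 - 2t)`. -/
theorem subgaussian_square_mgf_gaussian_comparison
    {Ω : Type*} [MeasurableSpace Ω] (μ : Measure Ω) [IsProbabilityMeasure μ]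
    (b : ℝ) (hb0 : 0 < b) (hb1 : b ≤ 1) (N : ℕ) (r : Fin N → Ω → ℝ)
    (hmeas : ∀ i, Measurable (r i))
    (hindep : iIndepFun r μ)
    (hident : ∀ i j, IdentDistrib (r i) (r j) μ μ)
    (hmean : ∀ i, ∫ ω, r i ω ∂μ = 0)
    (hint : ∀ i (t : ℝ), Integrable (fun ω => Real.exp (t * r i ω)) μ)
    (hsub : ∀ i (t : ℝ), ∫ ω, Real.exp (t * r i ω) ∂μ ≤ Real.exp (b ^ 2 * t ^ 2 / 2))
    (w : Fin N → ℝ) (hw : ∑ i, (w i) ^ 2 = 1)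
    (t : ℝ) (ht0 : 0 ≤ t) (ht1 : t < 1 / 2) :
    ∫ ω, Real.exp (t * (∑ i, w i * r i ω) ^ 2) ∂μ ≤ 1 / Real.sqrt (1 - 2 * t) := by
  classical
  set X : Ω → ℝ := fun ω => ∑ i, w i * r i ω with hXdef
  have hXmeas : Measurable X :=
    Finset.measurable_sum _ (fun i _ => (hmeas i).const_mul (w i))
  set Y : Fin N → Ω → ℝ := fun i ω => w i * r i ω with hYdef
  have hYmeas : ∀ i, Measurable (Y i) := fun i => (hmeas i).const_mul (w i)
  have hYindep : iIndepFun Y μ :=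
    hindep.comp (fun i x => w i * x) (fun i => measurable_const_mul (w i))
  have hYint : ∀ (s : ℝ) i, Integrable (fun ω => Real.exp (s * Y i ω)) μ := by
    intro s i
    have := hint i (s * w i)
    simpa [mul_assoc] using this
  have hXsum : ∀ ω, X ω = (∑ i, Y i) ω := by
    intro ω; simp [hXdef, hYdef, Finset.sum_apply]
  have hXint : ∀ s : ℝ, Integrable (fun ω => Real.exp (s * X ω)) μ := by
    intro s
    have h := hYindep.integrable_exp_mul_sum hYmeas
      (s := Finset.univ) (fun i _ => hYint s i)
    apply h.congr
    filter_upwards with ω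
    rw [hXsum]
  have hXmgf : ∀ s : ℝ, ∫ ω, Real.exp (s * X ω) ∂μ ≤ Real.exp (s ^ 2 / 2) := by
    intro s
    have hmgf := hYindep.mgf_sum hYmeas Finset.univ (t := s)
    have hL : ∫ ω, Real.exp (s * X ω) ∂μ = mgf (∑ i, Y i) μ s := by
      unfold mgf
      congr 1
      ext ω
      rw [hXsum]
    rw [hL, hmgf]
    calc ∏ i, mgf (Y i) μ s ≤ ∏ i, Real.exp (s ^ 2 * w i ^ 2 / 2) := by
          refine Finset.prod_le_prod (fun i _ => mgf_nonneg) ?_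
          intro i _
          have h1 : mgf (Y i) μ s = ∫ ω, Real.exp ((s * w i) * r i ω) ∂μ := by
            unfold mgf
            congr 1
            ext ω
            rw [hYdef]
            ring_nf
          rw [h1]
          refine (hsub i (s * w i)).trans ?_
          apply Real.exp_le_exp.mpr
          have hb2 : b ^ 2 ≤ 1 := by nlinarith
          nlinarith [sq_nonneg (s * w i)]
      _ = Real.exp (s ^ 2 / 2) := by
          rw [← Real.exp_sum]
          congr 1
          rw [← Finset.sum_div, ← Finset.mul_sum, hw, mul_one]
  -- Gaussian comparison
  set c : ℝ := Real.sqrt (2 * t) with hcdef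
  have ht2 : (0:ℝ) ≤ 2 * t := by linarith
  have hc2 : c ^ 2 = 2 * t := Real.sq_sqrt ht2
  have h12t : (0:ℝ) < 1 - 2 * t := by linarith
  have hhalf : (0:ℝ) < 1/2 - t := by linarith
  set K : ℝ := Real.sqrt (2 * π) with hKdef
  have hKpos : 0 < K := Real.sqrt_pos.mpr (by positivity)
  have hpt : ∀ x : ℝ, ∫ g : ℝ, Real.exp (c * x * g) * Real.exp (-g ^ 2 / 2)
      = K * Real.exp (t * x ^ 2) := by
    intro x
    rw [gauss_mgf (c * x)]
    congr 2
    rw [mul_pow, hc2]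
    ring
  set L : ℝ≥0∞ := ∫⁻ ω, ENNReal.ofReal (Real.exp (t * X ω ^ 2)) ∂μ with hLdef
  have hA : ∀ ω, (∫⁻ g : ℝ, ENNReal.ofReal (Real.exp (c * X ω * g) * Real.exp (-g ^ 2 / 2)))
      = ENNReal.ofReal (K * Real.exp (t * X ω ^ 2)) := by
    intro ω
    rw [← ofReal_integral_eq_lintegral_ofReal (gauss_shift_integrable (c * X ω))
      (Filter.Eventually.of_forall fun g => by positivity), hpt]
  have hswap :
      (∫⁻ ω, (∫⁻ g : ℝ, ENNReal.ofReal (Real.exp (c * X ω * g) * Real.exp (-g ^ 2 / 2))) ∂μ)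
      = ∫⁻ g : ℝ, (∫⁻ ω, ENNReal.ofReal (Real.exp (c * X ω * g) * Real.exp (-g ^ 2 / 2)) ∂μ) := by
    apply lintegral_lintegral_swap
    apply Measurable.aemeasurable
    apply Measurable.ennreal_ofReal
    exact ((((hXmeas.comp measurable_fst).const_mul c).mul measurable_snd).exp.mul
      (((measurable_snd.pow_const 2).neg.div_const 2).exp))
  have hB : ∀ g : ℝ, (∫⁻ ω, ENNReal.ofReal (Real.exp (c * X ω * g) * Real.exp (-g ^ 2 / 2)) ∂μ)
      ≤ ENNReal.ofReal (Real.exp (t * g ^ 2) * Real.exp (-g ^ 2 / 2)) := by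
    intro g
    have heq : ∀ ω, Real.exp (c * X ω * g) * Real.exp (-g ^ 2 / 2)
        = Real.exp ((c * g) * X ω) * Real.exp (-g ^ 2 / 2) := by
      intro ω; ring_nf
    simp_rw [heq, ENNReal.ofReal_mul (Real.exp_pos _).le]
    rw [lintegral_mul_const _ (((hXmeas.const_mul (c * g)).exp).ennreal_ofReal)]
    have hle : (∫⁻ ω, ENNReal.ofReal (Real.exp ((c * g) * X ω)) ∂μ)
        ≤ ENNReal.ofReal (Real.exp ((c * g) ^ 2 / 2)) := by
      rw [← ofReal_integral_eq_lintegral_ofReal (hXint (c * g))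
        (Filter.Eventually.of_forall fun ω => (Real.exp_pos _).le)]
      exact ENNReal.ofReal_le_ofReal (hXmgf (c * g))
    refine le_trans (mul_le_mul_left hle _) ?_
    rw [← ENNReal.ofReal_mul (Real.exp_pos ((c * g) ^ 2 / 2)).le,
      ← ENNReal.ofReal_mul (Real.exp_pos (t * g ^ 2)).le]
    apply ENNReal.ofReal_le_ofReal
    have h2 : (c * g) ^ 2 / 2 = t * g ^ 2 := by
      rw [mul_pow, hc2]; ring
    rw [h2]
  have hGeq : ∀ g : ℝ, Real.exp (t * g ^ 2) * Real.exp (-g ^ 2 / 2)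
      = Real.exp (-(1/2 - t) * g ^ 2) := by
    intro g; rw [← Real.exp_add]; ring_nf
  have hGint : Integrable (fun g : ℝ => Real.exp (t * g ^ 2) * Real.exp (-g ^ 2 / 2)) := by
    simp_rw [hGeq]
    exact integrable_exp_neg_mul_sq hhalf
  have hGval : ∫ g : ℝ, Real.exp (t * g ^ 2) * Real.exp (-g ^ 2 / 2)
      = Real.sqrt (π / (1/2 - t)) := by
    simp_rw [hGeq]
    exact integral_gaussian _
  have hKL : ENNReal.ofReal K * L ≤ ENNReal.ofReal (Real.sqrt (π / (1/2 - t))) := by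
    have step1 : ENNReal.ofReal K * L
        = ∫⁻ ω, ENNReal.ofReal (K * Real.exp (t * X ω ^ 2)) ∂μ := by
      rw [hLdef, ← lintegral_const_mul _ (((hXmeas.pow_const 2).const_mul t).exp.ennreal_ofReal)]
      congr 1
      ext ω
      rw [ENNReal.ofReal_mul hKpos.le]
    calc ENNReal.ofReal K * L
        = ∫⁻ ω, ENNReal.ofReal (K * Real.exp (t * X ω ^ 2)) ∂μ := step1
      _ = ∫⁻ ω, (∫⁻ g : ℝ, ENNReal.ofReal (Real.exp (c * X ω * g) * Real.exp (-g ^ 2 / 2))) ∂μ := by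
          simp_rw [hA]
      _ = ∫⁻ g : ℝ, (∫⁻ ω, ENNReal.ofReal (Real.exp (c * X ω * g) * Real.exp (-g ^ 2 / 2)) ∂μ) :=
          hswap
      _ ≤ ∫⁻ g : ℝ, ENNReal.ofReal (Real.exp (t * g ^ 2) * Real.exp (-g ^ 2 / 2)) :=
          lintegral_mono hB
      _ = ENNReal.ofReal (∫ g : ℝ, Real.exp (t * g ^ 2) * Real.exp (-g ^ 2 / 2)) :=
          (ofReal_integral_eq_lintegral_ofReal hGint
            (Filter.Eventually.of_forall fun g => by positivity)).symm
      _ = ENNReal.ofReal (Real.sqrt (π / (1/2 - t))) := by rw [hGval]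
  have hKeq : K * (1 / Real.sqrt (1 - 2 * t)) = Real.sqrt (π / (1/2 - t)) := by
    rw [mul_one_div, hKdef, ← Real.sqrt_div (by positivity)]
    congr 1
    field_simp
  have hfin : L ≤ ENNReal.ofReal (1 / Real.sqrt (1 - 2 * t)) := by
    have h0 : ENNReal.ofReal K ≠ 0 := by
      simp [ENNReal.ofReal_eq_zero, not_le, hKpos]
    have htop : ENNReal.ofReal K ≠ ⊤ := ENNReal.ofReal_ne_top
    rw [← ENNReal.mul_le_mul_iff_right h0 htop]
    refine hKL.trans_eq ?_
    rw [← ENNReal.ofReal_mul hKpos.le, hKeq]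
  have hmeas2 : AEStronglyMeasurable (fun ω => Real.exp (t * X ω ^ 2)) μ :=
    ((hXmeas.pow_const 2).const_mul t).exp.aestronglyMeasurable
  have hrw : ∫ ω, Real.exp (t * (∑ i, w i * r i ω) ^ 2) ∂μ
      = ∫ ω, Real.exp (t * X ω ^ 2) ∂μ := rfl
  rw [hrw, integral_eq_lintegral_of_nonneg_ae
    (Filter.Eventually.of_forall fun ω => (Real.exp_pos _).le) hmeas2]
  have hmono := ENNReal.toReal_mono ENNReal.ofReal_ne_top hfin
  rw [ENNReal.toReal_ofReal (by positivity)] at hmono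
  exact hmono
end

section
/- Let r_1, ..., r_n be i.i.d. random vectors in ℝ^N whose components are i.i.d. real random variables with mean 0, variance 1, and E[e^{t r}] ≤ e^{t² / 2} for all t ∈ ℝ (1-subgaussian). Let v ∈ ℝ^N be nonzero. Then for every δ with 0 < δ ≤ ‖v‖², P[ (1/n) Σ_{j=1}^n (r_j · v)² − ‖v‖² > δ ] ≤ exp( −n δ² / (8 ‖v‖⁴) ), where r_j · v is the Euclidean inner product and ‖·‖ the Euclidean norm. -/
open MeasureTheory ProbabilityTheory Real

section Aux

variable {Ω : Type*} [MeasurableSpace Ω] {μ : Measure Ω}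

/-- Precomposition of an independent family with an injective index map. -/
lemma iIndepFun_precomp_of_injective {ι κ : Type*} {β : Type*} [MeasurableSpace β]
    {f : ι → Ω → β} (h : iIndepFun f μ)
    (g : κ → ι) (hg : Function.Injective g) :
    iIndepFun (fun k => f (g k)) μ := by
  classical
  rw [iIndepFun_iff_measure_inter_preimage_eq_mul] at h ⊢
  intro S sets hsets
  have hext : ∀ k, Function.extend g sets (fun _ => Set.univ) (g k) = sets k :=
    fun k => hg.extend_apply _ _ _
  have h1 := h (S.image g) (sets := Function.extend g sets fun _ => Set.univ) ?_
  · have hInter : (⋂ i ∈ S.image g, f i ⁻¹' Function.extend g sets (fun _ => Set.univ) i)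
        = ⋂ k ∈ S, f (g k) ⁻¹' sets k := by
      ext ω
      simp only [Set.mem_iInter, Finset.mem_image]
      constructor
      · intro H k hk
        have := H (g k) ⟨k, hk, rfl⟩
        rwa [hext] at this
      · rintro H i ⟨k, hk, rfl⟩
        rw [hext]; exact H k hk
    rw [hInter, Finset.prod_image (fun a _ b _ hab => hg hab)] at h1
    simpa only [hext] using h1
  · intro i hi
    rcases Finset.mem_image.mp hi with ⟨k, hk, rfl⟩
    rw [hext]; exact hsets k hk

/-- Grouping: from joint independence of a doubly-indexed family, the row vectors are
independent. -/
lemma iIndepFun_grouping {n N : ℕ} {r : Fin n → Fin N → Ω → ℝ}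
    [IsProbabilityMeasure μ]
    (hmeas : ∀ j i, Measurable (r j i))
    (hindep : iIndepFun (fun p : Fin n × Fin N => r p.1 p.2) μ) :
    iIndepFun
      (fun j => fun ω (i : Fin N) => r j i ω) μ := by
  classical
  rw [iIndepFun_iff_iIndep]
  have hcomap : (fun j => MeasurableSpace.pi.comap (fun ω (i : Fin N) => r j i ω))
      = fun j => ⨆ i : Fin N, MeasurableSpace.comap (r j i) inferInstance := by
    funext j
    rw [MeasurableSpace.pi, MeasurableSpace.comap_iSup]
    congr 1
    funext i
    rw [MeasurableSpace.comap_comp]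
    rfl
  rw [hcomap]
  refine iIndepSets.iIndep (fun j => iSup_le fun i => (hmeas j i).comap_le)
    (fun j => piiUnionInter
      (fun i => {s | MeasurableSet[MeasurableSpace.comap (r j i) inferInstance] s}) Set.univ)
    (fun j => isPiSystem_piiUnionInter
      (fun i => {s | MeasurableSet[MeasurableSpace.comap (r j i) inferInstance] s})
      (fun i s hs t ht _ =>
        @MeasurableSet.inter Ω (MeasurableSpace.comap (r j i) inferInstance) s t hs ht) Set.univ)
    (fun j => by
      have h := generateFrom_piiUnionInter_measurableSet
        (fun i => MeasurableSpace.comap (r j i) inferInstance) Set.univ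
      simp only [iSup_univ] at h
      exact h.symm) ?_
  rw [iIndepSets_iff]
  intro S A hA
  simp only [piiUnionInter, Set.mem_setOf_eq] at hA
  choose! T hT C hC hAeq using hA
  have hC' : ∀ j ∈ S, ∀ i ∈ T j, ∃ B : Set ℝ, MeasurableSet B ∧ r j i ⁻¹' B = C j i := by
    intro j hj i hi
    exact MeasurableSpace.measurableSet_comap.mp (hC j hj i hi)
  choose! B hBmeas hBeq using hC'
  set Q : Finset (Fin n × Fin N) := S.biUnion (fun j => (T j).image (fun i => (j, i))) with hQ
  have hQmem : ∀ p : Fin n × Fin N, p ∈ Q ↔ p.1 ∈ S ∧ p.2 ∈ T p.1 := by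
    intro p
    simp only [hQ, Finset.mem_biUnion, Finset.mem_image]
    constructor
    · rintro ⟨j, hj, i, hi, rfl⟩; exact ⟨hj, hi⟩
    · rintro ⟨h1, h2⟩; exact ⟨p.1, h1, p.2, h2, rfl⟩
  have key : ∀ Q' : Finset (Fin n × Fin N), (∀ p ∈ Q', p.1 ∈ S ∧ p.2 ∈ T p.1) →
      μ (⋂ p ∈ Q', r p.1 p.2 ⁻¹' B p.1 p.2) = ∏ p ∈ Q', μ (r p.1 p.2 ⁻¹' B p.1 p.2) := by
    intro Q' hQ'
    exact hindep.measure_inter_preimage_eq_mul Q'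
      (fun p hp => hBmeas p.1 (hQ' p hp).1 p.2 (hQ' p hp).2)
  have hAeq' : ∀ j ∈ S, A j = ⋂ i ∈ T j, r j i ⁻¹' B j i := by
    intro j hj
    rw [hAeq j hj]
    exact Set.iInter₂_congr fun i hi => (hBeq j hj i hi).symm
  have himg : ∀ j, (⋂ p ∈ (T j).image (fun i => (j, i)), r p.1 p.2 ⁻¹' B p.1 p.2)
      = ⋂ i ∈ T j, r j i ⁻¹' B j i := by
    intro j
    ext ω
    simp only [Set.mem_iInter, Finset.mem_image]
    constructor
    · intro H i hi; exact H (j, i) ⟨i, hi, rfl⟩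
    · rintro H p ⟨i, hi, rfl⟩; exact H i hi
  have hAj : ∀ j ∈ S, μ (A j) = ∏ p ∈ (T j).image (fun i => (j, i)), μ (r p.1 p.2 ⁻¹' B p.1 p.2) := by
    intro j hj
    rw [hAeq' j hj, ← himg j]
    exact key _ (by rintro p hp; rcases Finset.mem_image.mp hp with ⟨i, hi, rfl⟩; exact ⟨hj, hi⟩)
  have hInterQ : (⋂ p ∈ Q, r p.1 p.2 ⁻¹' B p.1 p.2) = ⋂ j ∈ S, A j := by
    ext ω
    simp only [Set.mem_iInter]
    constructor
    · intro H j hj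
      rw [hAeq' j hj]
      simp only [Set.mem_iInter]
      intro i hi
      exact H (j, i) ((hQmem (j, i)).mpr ⟨hj, hi⟩)
    · intro H p hp
      obtain ⟨h1, h2⟩ := (hQmem p).mp hp
      have := H p.1 h1
      rw [hAeq' p.1 h1] at this
      simp only [Set.mem_iInter] at this
      exact this p.2 h2
  have hdisj : (S : Set (Fin n)).PairwiseDisjoint (fun j => (T j).image (fun i => (j, i))) := by
    intro a _ b _ hab
    simp only [Function.onFun, Finset.disjoint_left]
    intro p hpa hpb
    rcases Finset.mem_image.mp hpa with ⟨i, _, rfl⟩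
    rcases Finset.mem_image.mp hpb with ⟨i', _, h⟩
    exact hab (congrArg Prod.fst h).symm
  calc μ (⋂ j ∈ S, A j) = μ (⋂ p ∈ Q, r p.1 p.2 ⁻¹' B p.1 p.2) := by rw [hInterQ]
    _ = ∏ p ∈ Q, μ (r p.1 p.2 ⁻¹' B p.1 p.2) := key Q (fun p hp => (hQmem p).mp hp)
    _ = ∏ j ∈ S, ∏ p ∈ (T j).image (fun i => (j, i)), μ (r p.1 p.2 ⁻¹' B p.1 p.2) :=
        Finset.prod_biUnion hdisj
    _ = ∏ j ∈ S, μ (A j) := Finset.prod_congr rfl fun j hj => (hAj j hj).symm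

end Aux

section StepA

variable {Ω : Type*} [MeasurableSpace Ω] {μ : Measure Ω}

/-- mgf bound for a linear combination of independent 1-subgaussian variables. -/
lemma mgf_dot_bound {N : ℕ} [IsProbabilityMeasure μ] {R : Fin N → Ω → ℝ}
    (hmeas : ∀ i, Measurable (R i))
    (hindep : iIndepFun R μ)
    (hint : ∀ i (t : ℝ), Integrable (fun ω => exp (t * R i ω)) μ)
    (hsub : ∀ i (t : ℝ), ∫ ω, exp (t * R i ω) ∂μ ≤ exp (t ^ 2 / 2))
    (v : Fin N → ℝ) (s : ℝ) :
    Integrable (fun ω => exp (s * ∑ i, R i ω * v i)) μ ∧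
      ∫ ω, exp (s * ∑ i, R i ω * v i) ∂μ ≤ exp (s ^ 2 * (∑ i, (v i) ^ 2) / 2) := by
  classical
  set Y : Fin N → Ω → ℝ := fun i ω => R i ω * v i with hY
  have hYmeas : ∀ i, Measurable (Y i) := fun i => (hmeas i).mul_const _
  have hYindep : iIndepFun Y μ :=
    hindep.comp (fun i x => x * v i) (fun i => measurable_id.mul_const _)
  have hYint : ∀ i ∈ Finset.univ, Integrable (fun ω => exp (s * Y i ω)) μ := by
    intro i _
    have heq : (fun ω => exp (s * Y i ω)) = fun ω => exp ((s * v i) * R i ω) := by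
      funext ω; congr 1; simp only [hY]; ring
    rw [heq]; exact hint i (s * v i)
  have hsum : (fun ω => exp (s * ∑ i, R i ω * v i))
      = fun ω => exp (s * (∑ i, Y i) ω) := by
    funext ω; simp only [hY, Finset.sum_apply]
  constructor
  · rw [hsum]
    exact hYindep.integrable_exp_mul_sum hYmeas hYint
  · have hmgf := hYindep.mgf_sum hYmeas Finset.univ (t := s)
    have hintegral : ∫ ω, exp (s * ∑ i, R i ω * v i) ∂μ = mgf (∑ i, Y i) μ s := by
      rw [mgf]; congr 1
    rw [hintegral, hmgf]
    have hbound : ∀ i ∈ Finset.univ, mgf (Y i) μ s ≤ exp ((s * v i) ^ 2 / 2) := by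
      intro i _
      rw [mgf]
      have heq : (fun ω => exp (s * Y i ω)) = fun ω => exp ((s * v i) * R i ω) := by
        funext ω; congr 1; simp only [hY]; ring
      calc ∫ ω, exp (s * Y i ω) ∂μ = ∫ ω, exp ((s * v i) * R i ω) ∂μ := by rw [heq]
        _ ≤ exp ((s * v i) ^ 2 / 2) := hsub i (s * v i)
    calc ∏ i, mgf (Y i) μ s ≤ ∏ i, exp ((s * v i) ^ 2 / 2) :=
          Finset.prod_le_prod (fun i _ => mgf_nonneg) hbound
      _ = exp (∑ i, (s * v i) ^ 2 / 2) := by rw [Real.exp_sum]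
      _ = exp (s ^ 2 * (∑ i, (v i) ^ 2) / 2) := by
          congr 1
          have h : ∀ i : Fin N, (s * v i) ^ 2 / 2 = s ^ 2 / 2 * (v i) ^ 2 := fun i => by ring
          simp_rw [h, ← Finset.mul_sum]
          ring

end StepA

section StepB

variable {Ω : Type*} [MeasurableSpace Ω] {μ : Measure Ω}

/-- Gaussian-comparison bound: if `Z` is `√a`-subgaussian then
`E[exp (t Z²)] ≤ 1/√(1-2ta)`. -/
lemma integral_exp_sq_le [IsProbabilityMeasure μ] {Z : Ω → ℝ} (hZ : Measurable Z)
    {a t : ℝ} (ha : 0 < a) (ht : 0 ≤ t) (hta : 2 * t * a < 1)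
    (hint : ∀ s : ℝ, Integrable (fun ω => exp (s * Z ω)) μ)
    (hsub : ∀ s : ℝ, ∫ ω, exp (s * Z ω) ∂μ ≤ exp (s ^ 2 * a / 2)) :
    Integrable (fun ω => exp (t * Z ω ^ 2)) μ ∧
      ∫ ω, exp (t * Z ω ^ 2) ∂μ ≤ 1 / Real.sqrt (1 - 2 * t * a) := by
  set c := Real.sqrt (2 * t) with hc
  have hc2 : c ^ 2 = 2 * t := Real.sq_sqrt (by linarith)
  have hfun : ∀ z : ℝ, (fun g : ℝ => exp (c * z * g - g ^ 2 / 2))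
      = fun g : ℝ => exp (-(2⁻¹ : ℝ) * (g - c * z) ^ 2) * exp (t * z ^ 2) := by
    intro z
    funext g
    rw [← Real.exp_add]
    congr 1
    linear_combination (z ^ 2 / 2) * hc2
  have hgint : ∀ z : ℝ, Integrable (fun g : ℝ => exp (c * z * g - g ^ 2 / 2)) := by
    intro z
    rw [hfun z]
    exact ((integrable_exp_neg_mul_sq (by norm_num : (0:ℝ) < 2⁻¹)).comp_sub_right (c * z)).mul_const _
  have hpoint : ∀ z : ℝ, ∫ g : ℝ, exp (c * z * g - g ^ 2 / 2)
      = Real.sqrt (2 * π) * exp (t * z ^ 2) := by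
    intro z
    rw [hfun z]
    have hshift := integral_sub_right_eq_self (μ := volume)
      (fun g : ℝ => exp (-(2⁻¹ : ℝ) * g ^ 2)) (c * z)
    calc ∫ g : ℝ, exp (-(2⁻¹ : ℝ) * (g - c * z) ^ 2) * exp (t * z ^ 2)
        = (∫ g : ℝ, exp (-(2⁻¹ : ℝ) * (g - c * z) ^ 2)) * exp (t * z ^ 2) :=
          integral_mul_const _ _
      _ = (∫ g : ℝ, exp (-(2⁻¹ : ℝ) * g ^ 2)) * exp (t * z ^ 2) := by rw [hshift]
      _ = Real.sqrt (2 * π) * exp (t * z ^ 2) := by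
          rw [integral_gaussian]
          congr 1
          norm_num [mul_comm]
  set b := (1 - 2 * t * a) / 2 with hbdef
  have hb : 0 < b := by rw [hbdef]; linarith
  have hinner : ∀ g : ℝ, ∫⁻ ω, ENNReal.ofReal (exp (c * Z ω * g - g ^ 2 / 2)) ∂μ
      ≤ ENNReal.ofReal (exp (-b * g ^ 2)) := by
    intro g
    have hfun2 : (fun ω => exp (c * Z ω * g - g ^ 2 / 2))
        = fun ω => exp ((c * g) * Z ω) * exp (-(g ^ 2 / 2)) := by
      funext ω; rw [← Real.exp_add]; congr 1; ring
    have hIntg : Integrable (fun ω => exp (c * Z ω * g - g ^ 2 / 2)) μ := by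
      rw [hfun2]; exact (hint (c * g)).mul_const _
    rw [← ofReal_integral_eq_lintegral_ofReal hIntg
      (Filter.Eventually.of_forall fun ω => (exp_pos _).le)]
    apply ENNReal.ofReal_le_ofReal
    calc ∫ ω, exp (c * Z ω * g - g ^ 2 / 2) ∂μ
        = (∫ ω, exp ((c * g) * Z ω) ∂μ) * exp (-(g ^ 2 / 2)) := by
          rw [hfun2, integral_mul_const]
      _ ≤ exp ((c * g) ^ 2 * a / 2) * exp (-(g ^ 2 / 2)) :=
          mul_le_mul_of_nonneg_right (hsub (c * g)) (exp_pos _).le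
      _ = exp (-b * g ^ 2) := by
          rw [← Real.exp_add]
          congr 1
          rw [hbdef]
          linear_combination (g ^ 2 * a / 2) * hc2
  have hprodmeas : Measurable (fun p : Ω × ℝ =>
      ENNReal.ofReal (exp (c * Z p.1 * p.2 - p.2 ^ 2 / 2))) := by
    apply Measurable.ennreal_ofReal
    apply Measurable.exp
    exact (((hZ.comp measurable_fst).const_mul c).mul measurable_snd).sub
      ((measurable_snd.pow_const 2).div_const 2)
  have hswap : ∫⁻ ω, (∫⁻ g, ENNReal.ofReal (exp (c * Z ω * g - g ^ 2 / 2))) ∂μ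
      = ∫⁻ g, ∫⁻ ω, ENNReal.ofReal (exp (c * Z ω * g - g ^ 2 / 2)) ∂μ :=
    lintegral_lintegral_swap hprodmeas.aemeasurable
  set K := ENNReal.ofReal (Real.sqrt (2 * π)) with hK
  have hKtop : K ≠ ⊤ := ENNReal.ofReal_ne_top
  have hK0 : K ≠ 0 := by
    rw [hK, ne_eq, ENNReal.ofReal_eq_zero, not_le]
    positivity
  have hofReal : ∀ z : ℝ, K * ENNReal.ofReal (exp (t * z ^ 2))
      = ∫⁻ g, ENNReal.ofReal (exp (c * z * g - g ^ 2 / 2)) := by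
    intro z
    rw [← ofReal_integral_eq_lintegral_ofReal (hgint z)
      (Filter.Eventually.of_forall fun g => (exp_pos _).le), hpoint z,
      ENNReal.ofReal_mul (Real.sqrt_nonneg _)]
  have hmain : K * ∫⁻ ω, ENNReal.ofReal (exp (t * Z ω ^ 2)) ∂μ
      ≤ K * ENNReal.ofReal (1 / Real.sqrt (1 - 2 * t * a)) := by
    calc K * ∫⁻ ω, ENNReal.ofReal (exp (t * Z ω ^ 2)) ∂μ
        = ∫⁻ ω, K * ENNReal.ofReal (exp (t * Z ω ^ 2)) ∂μ :=
          (lintegral_const_mul' _ _ hKtop).symm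
      _ = ∫⁻ ω, (∫⁻ g, ENNReal.ofReal (exp (c * Z ω * g - g ^ 2 / 2))) ∂μ :=
          lintegral_congr fun ω => hofReal (Z ω)
      _ = ∫⁻ g, ∫⁻ ω, ENNReal.ofReal (exp (c * Z ω * g - g ^ 2 / 2)) ∂μ := hswap
      _ ≤ ∫⁻ g, ENNReal.ofReal (exp (-b * g ^ 2)) := lintegral_mono hinner
      _ = ENNReal.ofReal (∫ g : ℝ, exp (-b * g ^ 2)) :=
          (ofReal_integral_eq_lintegral_ofReal (integrable_exp_neg_mul_sq hb)
            (Filter.Eventually.of_forall fun g => (exp_pos _).le)).symm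
      _ = ENNReal.ofReal (Real.sqrt (π / b)) := by rw [integral_gaussian]
      _ = K * ENNReal.ofReal (1 / Real.sqrt (1 - 2 * t * a)) := by
          rw [hK, ← ENNReal.ofReal_mul (Real.sqrt_nonneg _)]
          congr 1
          rw [one_div, ← Real.sqrt_inv, ← Real.sqrt_mul (by positivity)]
          congr 1
          rw [hbdef]
          field_simp
  have hlint : ∫⁻ ω, ENNReal.ofReal (exp (t * Z ω ^ 2)) ∂μ
      ≤ ENNReal.ofReal (1 / Real.sqrt (1 - 2 * t * a)) :=
    (ENNReal.mul_le_mul_iff_right hK0 hKtop).mp hmain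
  have hZmeas2 : Measurable fun ω => exp (t * Z ω ^ 2) := ((hZ.pow_const 2).const_mul t).exp
  have hfin : HasFiniteIntegral (fun ω => exp (t * Z ω ^ 2)) μ := by
    rw [hasFiniteIntegral_iff_ofReal (Filter.Eventually.of_forall fun ω => (exp_pos _).le)]
    exact lt_of_le_of_lt hlint ENNReal.ofReal_lt_top
  refine ⟨⟨hZmeas2.aestronglyMeasurable, hfin⟩, ?_⟩
  rw [integral_eq_lintegral_of_nonneg_ae (Filter.Eventually.of_forall fun ω => (exp_pos _).le)
    hZmeas2.aestronglyMeasurable]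
  refine ENNReal.toReal_le_of_le_ofReal (by positivity) hlint

end StepB

/-- **Large deviation bound for the randomized misfit with 1-subgaussian entries.**
Let `r 1, ..., r n` be i.i.d. random vectors in `ℝ^N` whose components are (jointly) i.i.d.
real random variables with mean `0`, second moment `1`, and `E[exp (t r)] ≤ exp (t²/2)` for
all `t` (1-subgaussian).  Let `v ∈ ℝ^N` be nonzero.  Then for every `0 < δ ≤ ‖v‖²`,
`P[(1/n) ∑_j (r_j · v)² - ‖v‖² > δ] ≤ exp (-n δ² / (8 ‖v‖⁴))`,
where `r_j · v = ∑ i, r j i * v i` and `‖v‖² = ∑ i, (v i)²`. -/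
theorem randomized_misfit_tail_bound
    {Ω : Type*} [MeasurableSpace Ω] (μ : Measure Ω) [IsProbabilityMeasure μ]
    (N n : ℕ) (hn : 0 < n) (r : Fin n → Fin N → Ω → ℝ)
    (hmeas : ∀ j i, Measurable (r j i))
    (hindep : iIndepFun (fun p : Fin n × Fin N => r p.1 p.2) μ)
    (hident : ∀ p q : Fin n × Fin N, IdentDistrib (r p.1 p.2) (r q.1 q.2) μ μ)
    (hmean : ∀ j i, ∫ ω, r j i ω ∂μ = 0)
    (hvar : ∀ j i, ∫ ω, (r j i ω) ^ 2 ∂μ = 1)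
    (hint : ∀ j i (t : ℝ), Integrable (fun ω => Real.exp (t * r j i ω)) μ)
    (hsub : ∀ j i (t : ℝ), ∫ ω, Real.exp (t * r j i ω) ∂μ ≤ Real.exp (t ^ 2 / 2))
    (v : Fin N → ℝ) (hv : v ≠ 0)
    (δ : ℝ) (hδ0 : 0 < δ) (hδ1 : δ ≤ ∑ i, (v i) ^ 2) :
    (μ {ω | δ < (1 / (n : ℝ)) * ∑ j, (∑ i, r j i ω * v i) ^ 2 - ∑ i, (v i) ^ 2}).toReal ≤
      Real.exp (-(n : ℝ) * δ ^ 2 / (8 * (∑ i, (v i) ^ 2) ^ 2)) := by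
  classical
  set a := ∑ i, (v i) ^ 2 with hadef
  have ha : 0 < a := by
    obtain ⟨i, hi⟩ := Function.ne_iff.mp hv
    have hi' : v i ≠ 0 := by simpa using hi
    exact Finset.sum_pos' (fun k _ => sq_nonneg _) ⟨i, Finset.mem_univ i, by positivity⟩
  set Z : Fin n → Ω → ℝ := fun j ω => ∑ i, r j i ω * v i with hZdef
  have hZmeas : ∀ j, Measurable (Z j) := fun j =>
    Finset.measurable_sum _ fun i _ => (hmeas j i).mul_const _
  have hrow : ∀ (j : Fin n) (s : ℝ), Integrable (fun ω => exp (s * Z j ω)) μ ∧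
      ∫ ω, exp (s * Z j ω) ∂μ ≤ exp (s ^ 2 * a / 2) := by
    intro j s
    have hrowindep : iIndepFun (fun i : Fin N => r j i) μ :=
      iIndepFun_precomp_of_injective hindep (fun i : Fin N => ((j, i) : Fin n × Fin N))
        (fun i i' h => ((Prod.mk.injEq _ _ _ _).mp h).2)
    exact mgf_dot_bound (hmeas j) hrowindep (fun i t => hint j i t) (fun i t => hsub j i t) v s
  set t₀ : ℝ := δ / (2 * a * (δ + a)) with ht₀def
  have hδa : 0 < δ + a := by linarith
  have ht₀ : 0 ≤ t₀ := by positivity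
  have h2ta : 1 - 2 * t₀ * a = a / (δ + a) := by
    rw [ht₀def]; field_simp; ring
  have h2ta' : 2 * t₀ * a < 1 := by
    have hpos : 0 < a / (δ + a) := by positivity
    linarith
  set X : Fin n → Ω → ℝ := fun j ω => Z j ω ^ 2 with hXdef
  have hXmeas : ∀ j, Measurable (X j) := fun j => (hZmeas j).pow_const 2
  have hXindep : iIndepFun X μ := by
    have h := (iIndepFun_grouping hmeas hindep).comp
      (fun j (x : Fin N → ℝ) => (∑ i, x i * v i) ^ 2)
      (fun j => (Finset.measurable_sum _ fun i _ =>
        (measurable_pi_apply i).mul_const _).pow_const 2)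
    exact h
  have hXbound : ∀ j : Fin n, Integrable (fun ω => exp (t₀ * X j ω)) μ ∧
      ∫ ω, exp (t₀ * X j ω) ∂μ ≤ 1 / Real.sqrt (1 - 2 * t₀ * a) :=
    fun j => integral_exp_sq_le (hZmeas j) ha ht₀ h2ta'
      (fun s => (hrow j s).1) (fun s => (hrow j s).2)
  set S : Ω → ℝ := ∑ j, X j with hSdef
  have hSapp : ∀ ω, S ω = ∑ j, (∑ i, r j i ω * v i) ^ 2 := fun ω => by
    simp only [hSdef, Finset.sum_apply, hXdef, hZdef]
  have hSint : Integrable (fun ω => exp (t₀ * S ω)) μ :=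
    hXindep.integrable_exp_mul_sum hXmeas (fun j _ => (hXbound j).1)
  have hn' : (0:ℝ) < n := Nat.cast_pos.mpr hn
  have hsub_event : {ω | δ < (1 / (n : ℝ)) * ∑ j, (∑ i, r j i ω * v i) ^ 2 - a}
      ⊆ {ω | (n : ℝ) * (δ + a) ≤ S ω} := by
    intro ω hω
    simp only [Set.mem_setOf_eq] at hω ⊢
    rw [hSapp]
    have h1 : δ + a < (1 / (n : ℝ)) * ∑ j, (∑ i, r j i ω * v i) ^ 2 := by linarith
    have h2 : (n : ℝ) * (δ + a) < (n : ℝ) * ((1 / (n : ℝ)) * ∑ j, (∑ i, r j i ω * v i) ^ 2) :=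
      (mul_lt_mul_iff_right₀ hn').mpr h1
    have h3 : (n : ℝ) * ((1 / (n : ℝ)) * ∑ j, (∑ i, r j i ω * v i) ^ 2)
        = ∑ j, (∑ i, r j i ω * v i) ^ 2 := by
      field_simp
    linarith
  refine le_trans (ENNReal.toReal_mono (measure_ne_top μ _) (measure_mono hsub_event)) ?_
  refine le_trans (measure_ge_le_exp_mul_mgf ((n : ℝ) * (δ + a)) ht₀ hSint) ?_
  have hmgf : mgf S μ t₀ ≤ (1 / Real.sqrt (1 - 2 * t₀ * a)) ^ n := by
    rw [hSdef, hXindep.mgf_sum hXmeas]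
    calc ∏ j, mgf (X j) μ t₀ ≤ ∏ _j : Fin n, (1 / Real.sqrt (1 - 2 * t₀ * a)) :=
          Finset.prod_le_prod (fun j _ => mgf_nonneg) (fun j _ => (hXbound j).2)
      _ = (1 / Real.sqrt (1 - 2 * t₀ * a)) ^ n := by
          rw [Finset.prod_const, Finset.card_univ, Fintype.card_fin]
  -- single-sample numeric inequality
  set E : ℝ := δ / (2 * a) - δ ^ 2 / (8 * a ^ 2) with hEdef
  have hsingle : 1 / Real.sqrt (1 - 2 * t₀ * a) ≤ exp E := by
    rw [h2ta, one_div, ← Real.sqrt_inv, inv_div]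
    have hsq : (δ + a) / a ≤ exp E ^ 2 := by
      have hE2 : exp E ^ 2 = exp (δ / a - δ ^ 2 / (4 * a ^ 2)) := by
        rw [sq, ← Real.exp_add, hEdef]
        congr 1
        ring
      rw [hE2]
      set x : ℝ := δ / a with hxdef
      have hx0 : 0 < x := by positivity
      have hx1 : x ≤ 1 := (div_le_one ha).mpr hδ1
      have hxy : δ / a - δ ^ 2 / (4 * a ^ 2) = x - x ^ 2 / 4 := by
        rw [hxdef, div_pow]
        ring
      have hda : (δ + a) / a = 1 + x := by
        rw [hxdef]; field_simp; ring
      have hy0 : 0 ≤ x - x ^ 2 / 4 := by nlinarith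
      have hquad := Real.quadratic_le_exp_of_nonneg hy0
      rw [hxy, hda]
      nlinarith [hquad]
    calc Real.sqrt ((δ + a) / a) ≤ Real.sqrt (exp E ^ 2) := Real.sqrt_le_sqrt hsq
      _ = exp E := Real.sqrt_sq (exp_pos _).le
  have ht₀val : t₀ * (δ + a) = δ / (2 * a) := by
    rw [ht₀def]; field_simp
  calc exp (-t₀ * ((n : ℝ) * (δ + a))) * mgf S μ t₀
      ≤ exp (-t₀ * ((n : ℝ) * (δ + a))) * (1 / Real.sqrt (1 - 2 * t₀ * a)) ^ n :=
        mul_le_mul_of_nonneg_left hmgf (exp_pos _).le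
    _ ≤ exp (-t₀ * ((n : ℝ) * (δ + a))) * exp E ^ n := by
        apply mul_le_mul_of_nonneg_left _ (exp_pos _).le
        exact pow_le_pow_left₀ (by positivity) hsingle n
    _ = exp (-t₀ * ((n : ℝ) * (δ + a)) + (n : ℝ) * E) := by
        rw [← Real.exp_nat_mul, ← Real.exp_add]
    _ = exp (-(n : ℝ) * δ ^ 2 / (8 * a ^ 2)) := by
        congr 1
        have : -t₀ * ((n : ℝ) * (δ + a)) = -(n : ℝ) * (t₀ * (δ + a)) := by ring
        rw [this, ht₀val, hEdef]
        ring
end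

section
/- Let c > 0, let v ∈ ℝ^N be nonzero, and let r_1, ..., r_n be i.i.d. random vectors in ℝ^N such that for every δ > 0, P[ |(1/n) Σ_{j=1}^n (r_j · v)² − ‖v‖²| > δ ] ≤ exp( −n c δ² / ‖v‖⁴ ). Let 0 < ε < 1, β > 0, and n ≥ β / (c ε²). Then with probability at least 1 − e^{−β}, the following implication holds: if (1/n) Σ_{j=1}^n (r_j · v)² = τ′ N for some τ′ > 0, then ‖v‖² = τ N for some τ ∈ [ τ′/(1 + ε), τ′/(1 − ε) ]. -/
open MeasureTheory ProbabilityTheory Real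
open scoped RealInnerProductSpace

/-- **Statistical Morozov's discrepancy principle.**
Let `v ∈ ℝ^N` be nonzero and let `r 1, ..., r n` be i.i.d. random vectors in `ℝ^N`
satisfying the large deviation bound
`P[|(1/n) ∑_j (r_j · v)² - ‖v‖²| > δ] ≤ exp (-n c δ² / ‖v‖⁴)` for every `δ > 0`.
Let `0 < ε < 1`, `β > 0` and `n ≥ β/(c ε²)`.  Then with probability at least
`1 - exp (-β)`: if `(1/n) ∑_j (r_j · v)² = τ' N` for some `τ' > 0`, then `‖v‖² = τ N`
for some `τ ∈ [τ'/(1+ε), τ'/(1-ε)]`. -/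
theorem statistical_morozov
    {Ω : Type*} [MeasurableSpace Ω] (μ : Measure Ω) [IsProbabilityMeasure μ]
    (c : ℝ) (hc : 0 < c) (N n : ℕ) (hn : 0 < n)
    (r : Fin n → Ω → EuclideanSpace ℝ (Fin N))
    (hindep : iIndepFun r μ)
    (hident : ∀ j k, IdentDistrib (r j) (r k) μ μ)
    (v : EuclideanSpace ℝ (Fin N)) (hv : v ≠ 0)
    (hLD : ∀ δ : ℝ, 0 < δ →
      (μ {ω | δ < |(1 / (n : ℝ)) * ∑ j, ⟪r j ω, v⟫ ^ 2 - ‖v‖ ^ 2|}).toReal ≤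
        Real.exp (-(n : ℝ) * c * δ ^ 2 / ‖v‖ ^ 4))
    (ε β : ℝ) (hε0 : 0 < ε) (hε1 : ε < 1) (hβ : 0 < β)
    (hnlb : β / (c * ε ^ 2) ≤ (n : ℝ)) :
    1 - Real.exp (-β) ≤
      (μ {ω | ∀ τ' : ℝ, 0 < τ' →
          (1 / (n : ℝ)) * ∑ j, ⟪r j ω, v⟫ ^ 2 = τ' * N →
          ∃ τ : ℝ, τ ∈ Set.Icc (τ' / (1 + ε)) (τ' / (1 - ε)) ∧
            ‖v‖ ^ 2 = τ * N}).toReal := by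

  classical
  -- `N` must be positive since `v ≠ 0`
  have hN : 0 < N := by
    rcases Nat.eq_zero_or_pos N with h0 | h
    · subst h0; exact absurd (by ext i; exact i.elim0) hv
    exact h
  have hv2 : 0 < ‖v‖ ^ 2 := pow_pos (norm_pos_iff.2 hv) 2
  set δ : ℝ := ε * ‖v‖ ^ 2 with hδdef
  have hδ : 0 < δ := by positivity
  set B : Set Ω := {ω | δ < |(1 / (n : ℝ)) * ∑ j, ⟪r j ω, v⟫ ^ 2 - ‖v‖ ^ 2|} with hB
  set A : Set Ω := {ω | ∀ τ' : ℝ, 0 < τ' →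
      (1 / (n : ℝ)) * ∑ j, ⟪r j ω, v⟫ ^ 2 = τ' * N →
      ∃ τ : ℝ, τ ∈ Set.Icc (τ' / (1 + ε)) (τ' / (1 - ε)) ∧ ‖v‖ ^ 2 = τ * N} with hA
  -- complement of the bad event is contained in the good event
  have hsub : Bᶜ ⊆ A := by
    intro ω hω τ' hτ' hS
    simp only [hB, Set.mem_compl_iff, Set.mem_setOf_eq, not_lt] at hω
    refine ⟨‖v‖ ^ 2 / N, ⟨?_, ?_⟩, by field_simp⟩
    · rw [div_le_div_iff₀ (by positivity) (by positivity)]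
      have h1 : τ' * N - ‖v‖ ^ 2 ≤ ε * ‖v‖ ^ 2 := by
        rw [← hS]; calc _ ≤ |(1 / (n : ℝ)) * ∑ j, ⟪r j ω, v⟫ ^ 2 - ‖v‖ ^ 2| := le_abs_self _
          _ ≤ δ := hω
          _ = ε * ‖v‖ ^ 2 := rfl
      nlinarith
    · rw [div_le_div_iff₀ (by positivity) (by linarith)]
      have h1 : ‖v‖ ^ 2 - τ' * N ≤ ε * ‖v‖ ^ 2 := by
        rw [← hS]; calc _ ≤ |(1 / (n : ℝ)) * ∑ j, ⟪r j ω, v⟫ ^ 2 - ‖v‖ ^ 2| :=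
            (neg_le_abs _).trans' (by rw [neg_sub])
          _ ≤ δ := hω
          _ = ε * ‖v‖ ^ 2 := rfl
      nlinarith
  -- bound the bad event probability by `exp (-β)`
  have hbad : (μ B).toReal ≤ Real.exp (-β) := by
    refine (hLD δ hδ).trans ?_
    have hδ2 : -(n : ℝ) * c * δ ^ 2 / ‖v‖ ^ 4 = -((n : ℝ) * c * ε ^ 2) := by
      have h4 : (0:ℝ) < ‖v‖ ^ 4 := pow_pos (norm_pos_iff.2 hv) 4
      field_simp [hδdef]; ring
    rw [hδ2]
    apply Real.exp_le_exp.2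
    have : β ≤ (n : ℝ) * (c * ε ^ 2) := by
      rw [div_le_iff₀ (by positivity)] at hnlb; linarith
    nlinarith
  -- conclude
  have hle : (μ Bᶜ).toReal ≤ (μ A).toReal :=
    ENNReal.toReal_mono (measure_ne_top μ A) (measure_mono hsub)
  have hcompl : 1 - (μ B).toReal ≤ (μ Bᶜ).toReal := by
    have h1 : (1 : ENNReal) ≤ μ B + μ Bᶜ := by
      rw [← measure_univ (μ := μ)]
      exact (measure_mono (by simp [Set.union_compl_self])).trans (measure_union_le _ _)
    have hB1 : μ B ≠ ⊤ := measure_ne_top μ B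
    have hBc1 : μ Bᶜ ≠ ⊤ := measure_ne_top μ Bᶜ
    have := ENNReal.toReal_mono (by finiteness) h1
    rw [ENNReal.toReal_add hB1 hBc1, ENNReal.toReal_one] at this
    linarith
  linarith
end

section
/- Let F̂ be a real N×m matrix, Σ a real N×n matrix, K a symmetric positive definite real m×m matrix (playing the role of C^{-1}), d̂ ∈ ℝ^N, u_0 ∈ ℝ^m, and ε > 0. Let u* ∈ ℝ^m satisfy (F̂ᵀF̂ + K) u* = F̂ᵀ d̂ + K u_0 and let u_n ∈ ℝ^m satisfy (F̂ᵀ Σ Σᵀ F̂ + K) u_n = F̂ᵀ Σ Σᵀ d̂ + K u_0. Assume ‖Σ Σᵀ (F̂ u*) − F̂ u*‖ ≤ ε ‖F̂ u*‖ and ‖Σ Σᵀ d̂ − d̂‖ ≤ ε ‖d̂‖. Let λ > 0 be the smallest eigenvalue of the symmetric positive definite matrix F̂ᵀ Σ Σᵀ F̂ + K. Then ‖u_n − u*‖ ≤ (ε / λ) ( ‖F̂‖ ‖u*‖ + ‖d̂‖ ) ‖F̂‖, where ‖F̂‖ denotes the operator (spectral) norm and ‖·‖ the Euclidean norm on vectors.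 -/
open Matrix
open scoped Matrix.Norms.L2Operator

lemma smallest_eig_mulVec_le {m : ℕ} (M : Matrix (Fin m) (Fin m) ℝ) (hM : M.IsHermitian)
    (lam : ℝ) (hlam : 0 < lam) (hle : ∀ i, lam ≤ hM.eigenvalues i)
    (x : EuclideanSpace ℝ (Fin m)) :
    lam * ‖x‖ ≤ ‖(EuclideanSpace.equiv (Fin m) ℝ).symm (M *ᵥ x)‖ := by
  set b := hM.eigenvectorBasis with hb
  set y : EuclideanSpace ℝ (Fin m) := (EuclideanSpace.equiv (Fin m) ℝ).symm (M *ᵥ x) with hy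
  have ht : Mᵀ = M := hM
  have hrepr : ∀ j, b.repr y j = hM.eigenvalues j * b.repr x j := by
    intro j
    rw [b.repr_apply_apply y j, b.repr_apply_apply x j]
    simp only [PiLp.inner_apply, RCLike.inner_apply, starRingEnd_apply, star_trivial]
    have h1 : ∀ i, y i = (M *ᵥ (x : Fin m → ℝ)) i := fun i => rfl
    simp only [h1]
    have h2 : (⇑(b j) : Fin m → ℝ) ⬝ᵥ (M *ᵥ (x : Fin m → ℝ))
        = (M *ᵥ ⇑(b j)) ⬝ᵥ (x : Fin m → ℝ) := by
      rw [Matrix.dotProduct_mulVec, ← Matrix.mulVec_transpose, ht]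
    have h3 := hM.mulVec_eigenvectorBasis j
    calc ∑ i, (M *ᵥ (x : Fin m → ℝ)) i * b j i
        = ∑ i, b j i * (M *ᵥ (x : Fin m → ℝ)) i := Finset.sum_congr rfl (fun i _ => mul_comm _ _)
      _ = (⇑(b j) : Fin m → ℝ) ⬝ᵥ (M *ᵥ (x : Fin m → ℝ)) := rfl
      _ = (M *ᵥ ⇑(b j)) ⬝ᵥ (x : Fin m → ℝ) := h2
      _ = (hM.eigenvalues j • ⇑(b j)) ⬝ᵥ (x : Fin m → ℝ) := by rw [h3]
      _ = hM.eigenvalues j * ∑ i, b j i * x i := by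
          rw [smul_dotProduct]; rfl
      _ = hM.eigenvalues j * ∑ i, x i * b j i := by
          congr 1; exact Finset.sum_congr rfl (fun i _ => mul_comm _ _)
  have hnx : ‖x‖ = ‖b.repr x‖ := (b.repr.norm_map x).symm
  have hny : ‖y‖ = ‖b.repr y‖ := (b.repr.norm_map y).symm
  rw [hnx, hny]
  rw [EuclideanSpace.norm_eq, EuclideanSpace.norm_eq]
  rw [← Real.sqrt_sq hlam.le, ← Real.sqrt_mul (sq_nonneg lam)]
  apply Real.sqrt_le_sqrt
  rw [Finset.mul_sum]
  apply Finset.sum_le_sum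
  intro j _
  rw [hrepr j]
  have := hle j
  simp only [Real.norm_eq_abs, sq_abs]
  nlinarith [mul_nonneg (mul_nonneg (sub_nonneg.mpr this) (by linarith : (0:ℝ) ≤ hM.eigenvalues j + lam)) (sq_nonneg (b.repr x j))]


/-- **Solution error bound for the randomized misfit approach with a linear
parameter-to-observable map (Theorem (error), part (ii)).**
`F` is the `N × m` map `F̂`, `Sg` the `N × n` random projection matrix `Σ`, `K` a symmetric
positive definite `m × m` matrix (the inverse prior covariance `C⁻¹`), `d ∈ ℝ^N` the data,
`u0 ∈ ℝ^m` the prior mean.  `ustar` solves the original normal equations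
`(F̂ᵀF̂ + K) u* = F̂ᵀ d̂ + K u₀`, and `un` solves the randomized normal equations
`(F̂ᵀΣΣᵀF̂ + K) u_n = F̂ᵀΣΣᵀ d̂ + K u₀`.  Assuming the Johnson–Lindenstrauss-type bounds
`‖ΣΣᵀ(F̂u*) - F̂u*‖ ≤ ε‖F̂u*‖` and `‖ΣΣᵀd̂ - d̂‖ ≤ ε‖d̂‖`, and letting `λ > 0` be the
smallest eigenvalue of `F̂ᵀΣΣᵀF̂ + K`, we have
`‖u_n - u*‖ ≤ (ε/λ)(‖F̂‖‖u*‖ + ‖d̂‖)‖F̂‖`, with `‖F̂‖` the spectral norm and Euclidean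
norms on vectors. -/
theorem rma_linear_solution_error_bound
    (N m n : ℕ)
    (F : Matrix (Fin N) (Fin m) ℝ) (Sg : Matrix (Fin N) (Fin n) ℝ)
    (K : Matrix (Fin m) (Fin m) ℝ) (hK : K.PosDef)
    (d : EuclideanSpace ℝ (Fin N)) (u0 ustar un : EuclideanSpace ℝ (Fin m))
    (ε : ℝ) (hε : 0 < ε)
    (hustar : (Fᵀ * F + K) *ᵥ ustar = Fᵀ *ᵥ (EuclideanSpace.equiv (Fin N) ℝ d) + K *ᵥ u0)
    (hun : (Fᵀ * Sg * Sgᵀ * F + K) *ᵥ un = (Fᵀ * Sg * Sgᵀ) *ᵥ (EuclideanSpace.equiv (Fin N) ℝ d) + K *ᵥ u0)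
    (hJL1 : ‖(EuclideanSpace.equiv (Fin N) ℝ).symm
        ((Sg * Sgᵀ) *ᵥ (F *ᵥ ustar) - F *ᵥ ustar)‖ ≤
      ε * ‖(EuclideanSpace.equiv (Fin N) ℝ).symm (F *ᵥ ustar)‖)
    (hJL2 : ‖(EuclideanSpace.equiv (Fin N) ℝ).symm ((Sg * Sgᵀ) *ᵥ (EuclideanSpace.equiv (Fin N) ℝ d) - EuclideanSpace.equiv (Fin N) ℝ d)‖ ≤
      ε * ‖d‖)
    (lam : ℝ) (hlam : 0 < lam)
    (hM : (Fᵀ * Sg * Sgᵀ * F + K).IsHermitian)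
    (hlam_eig : lam = ⨅ i, hM.eigenvalues i) :
    ‖un - ustar‖ ≤ ε / lam * (‖F‖ * ‖ustar‖ + ‖d‖) * ‖F‖ := by
  set de : Fin N → ℝ := EuclideanSpace.equiv (Fin N) ℝ d with hde
  set w : Fin N → ℝ :=
    ((Sg * Sgᵀ) *ᵥ de - de) - ((Sg * Sgᵀ) *ᵥ (F *ᵥ ustar) - F *ᵥ ustar) with hw
  have hle : ∀ i, lam ≤ hM.eigenvalues i := by
    intro i
    rw [hlam_eig]
    exact ciInf_le (Set.Finite.bddBelow (Set.finite_range _)) i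
  have hK2 : K *ᵥ ustar = Fᵀ *ᵥ de + K *ᵥ u0 - (Fᵀ * F) *ᵥ ustar := by
    rw [Matrix.add_mulVec] at hustar
    rw [← hustar]; abel
  have key : (Fᵀ * Sg * Sgᵀ * F + K) *ᵥ (un - ustar) = Fᵀ *ᵥ w := by
    calc (Fᵀ * Sg * Sgᵀ * F + K) *ᵥ (un - ustar)
        = (Fᵀ * Sg * Sgᵀ * F + K) *ᵥ un - (Fᵀ * Sg * Sgᵀ * F + K) *ᵥ ustar :=
          Matrix.mulVec_sub _ _ _
      _ = (Fᵀ * Sg * Sgᵀ) *ᵥ de + K *ᵥ u0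
          - ((Fᵀ * Sg * Sgᵀ * F) *ᵥ ustar + K *ᵥ ustar) := by
          rw [hun, Matrix.add_mulVec]
      _ = Fᵀ *ᵥ w := by
          rw [hK2, hw]
          simp only [Matrix.mulVec_sub, Matrix.mulVec_mulVec, Matrix.mul_assoc]
          abel
  have hlow := smallest_eig_mulVec_le _ hM lam hlam hle (un - ustar)
  rw [WithLp.ofLp_sub, key] at hlow
  have hFt : ‖Fᵀ‖ = ‖F‖ := by
    rw [← Matrix.conjTranspose_eq_transpose_of_trivial, Matrix.l2_opNorm_conjTranspose]
  have hFw : ‖(EuclideanSpace.equiv (Fin m) ℝ).symm (Fᵀ *ᵥ w)‖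
      ≤ ‖F‖ * ‖(EuclideanSpace.equiv (Fin N) ℝ).symm w‖ := by
    have := Fᵀ.l2_opNorm_mulVec ((EuclideanSpace.equiv (Fin N) ℝ).symm w)
    rw [hFt] at this
    exact this
  have hwsplit : (EuclideanSpace.equiv (Fin N) ℝ).symm w
      = (EuclideanSpace.equiv (Fin N) ℝ).symm ((Sg * Sgᵀ) *ᵥ de - de)
        - (EuclideanSpace.equiv (Fin N) ℝ).symm ((Sg * Sgᵀ) *ᵥ (F *ᵥ ustar) - F *ᵥ ustar) := rfl
  have hFu : ‖(EuclideanSpace.equiv (Fin N) ℝ).symm (F *ᵥ ustar)‖ ≤ ‖F‖ * ‖ustar‖ :=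
    F.l2_opNorm_mulVec ustar
  have hwnorm : ‖(EuclideanSpace.equiv (Fin N) ℝ).symm w‖ ≤ ε * ‖d‖ + ε * (‖F‖ * ‖ustar‖) := by
    rw [hwsplit]
    refine (norm_sub_le _ _).trans ?_
    have h1 := hJL1.trans (by nlinarith : ε * ‖(EuclideanSpace.equiv (Fin N) ℝ).symm (F *ᵥ ustar)‖ ≤ ε * (‖F‖ * ‖ustar‖))
    exact add_le_add hJL2 h1
  have hchain : lam * ‖un - ustar‖ ≤ ‖F‖ * (ε * ‖d‖ + ε * (‖F‖ * ‖ustar‖)) := by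
    refine hlow.trans (hFw.trans ?_)
    exact mul_le_mul_of_nonneg_left hwnorm (norm_nonneg F)
  rw [div_mul_eq_mul_div, div_mul_eq_mul_div, le_div_iff₀ hlam]
  nlinarith [hchain]
end
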